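/- arXiv:1806.06442 — 8 statements merged into one kernel-verified Lean document; each statement's English description precedes it below -/
import Mathlib

section
/- Let X be a normed vector space, f : X → ℝ ∪ {+∞} convex, x ∈ X with f(x) > 0, and τ > 0. If τ · d(x, [f ≤ 0]) ≤ f(x), where [f ≤ 0] := {u ∈ X | f(u) ≤ 0}, then every subgradient x* ∈ ∂f(x) satisfies ‖x*‖ ≥ τ; in particular d(0, ∂f(x)) ≥ τ. -/
open EMetric ENNReal

/-- Convexity for an `EReal`-valued function (modelling `f : X → ℝ ∪ {+∞}`). -/
def EConvexOn {X : Type*} [NormedAddCommGroup X] [NormedSpace ℝ X]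
    (f : X → EReal) : Prop :=
  ∀ u v : X, ∀ t : ℝ, 0 ≤ t → t ≤ 1 →
    f (t • u + (1 - t) • v) ≤ (t : EReal) * f u + ((1 - t : ℝ) : EReal) * f v

/-- The (convex) subdifferential of `f` at `x`:
`x* ∈ ∂f(x)` iff `⟨x*, u − x⟩ ≤ f(u) − f(x)` for all `u`. -/
def ESubdiff {X : Type*} [NormedAddCommGroup X] [NormedSpace ℝ X]
    (f : X → EReal) (x : X) : Set (X →L[ℝ] ℝ) :=
  {g | ∀ u : X, ((g (u - x) : ℝ) : EReal) ≤ f u - f x}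

/-- The "positive part" of an extended real, as an element of `[0, +∞]`. -/
noncomputable def EReal.toENN (a : EReal) : ℝ≥0∞ :=
  if a = ⊤ then ⊤ else ENNReal.ofReal a.toReal

/-- if `f` is convex, `f(x) > 0` and `τ · d(x, [f ≤ 0]) ≤ f(x)`
(with `d(x, ∅) = +∞`), then every subgradient `x* ∈ ∂f(x)` satisfies `‖x*‖ ≥ τ`;
in particular `d(0, ∂f(x)) ≥ τ`. -/
theorem stmt_0 {X : Type*} [NormedAddCommGroup X] [NormedSpace ℝ X]
    (f : X → EReal) (hbot : ∀ u, f u ≠ ⊥) (hconv : EConvexOn f)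
    (x : X) (hx : 0 < f x) (τ : ℝ) (hτ : 0 < τ)
    (hEB : ENNReal.ofReal τ * EMetric.infEdist x {u | f u ≤ 0} ≤ (f x).toENN) :
    (∀ g ∈ ESubdiff f x, τ ≤ ‖g‖) ∧
      ENNReal.ofReal τ ≤ ⨅ g ∈ ESubdiff f x, ENNReal.ofReal ‖g‖ := by
  have main : ∀ g ∈ ESubdiff f x, τ ≤ ‖g‖ := by
    intro g hg
    by_cases htop : f x = ⊤
    · exfalso
      have h := hg x
      rw [htop, EReal.sub_top] at h
      exact EReal.coe_ne_bot _ (le_bot_iff.mp h)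
    have hfx : ((f x).toReal : EReal) = f x := EReal.coe_toReal htop (hbot x)
    set r := (f x).toReal with hrdef
    have hr : 0 < r := by
      have : ((0 : ℝ) : EReal) < (r : EReal) := by rw [hfx]; exact_mod_cast hx
      exact_mod_cast this
    have hENN : (f x).toENN = ENNReal.ofReal r := if_neg htop
    rw [hENN] at hEB
    have hSne : Set.Nonempty {u | f u ≤ 0} := by
      by_contra hS
      rw [Set.not_nonempty_iff_eq_empty] at hS
      have hE : EMetric.infEdist x (∅ : Set X) = ⊤ := EMetric.infEdist_empty
      rw [hS, hE, ENNReal.mul_top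
        (ENNReal.ofReal_pos.mpr hτ).ne'] at hEB
      exact ENNReal.ofReal_ne_top (top_le_iff.mp hEB)
    set D := EMetric.infEdist x {u | f u ≤ 0} with hD
    have hDtop : D ≠ ⊤ := Metric.infEdist_ne_top hSne
    have key : ∀ u ∈ {u | f u ≤ 0}, ENNReal.ofReal r ≤ ENNReal.ofReal ‖g‖ * edist x u := by
      intro u hu
      have hut : f u ≠ ⊤ := (lt_of_le_of_lt hu (by exact_mod_cast lt_top_iff_ne_top.mpr EReal.zero_ne_top)).ne
      have hfu : ((f u).toReal : EReal) = f u := EReal.coe_toReal hut (hbot u)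
      set s := (f u).toReal with hsdef
      have hs : s ≤ 0 := by
        have : (s : EReal) ≤ ((0:ℝ) : EReal) := by rw [hfu]; exact_mod_cast hu
        exact_mod_cast this
      have h := hg u
      rw [← hfu, ← hfx, ← EReal.coe_sub] at h
      have h' : g (u - x) ≤ s - r := EReal.coe_le_coe_iff.mp h
      have h2 : r ≤ g (x - u) := by
        have hneg : g (x - u) = - g (u - x) := by rw [← map_neg, neg_sub]
        linarith
      have h3 : g (x - u) ≤ ‖g‖ * ‖x - u‖ :=
        le_trans (le_abs_self _) (by simpa [Real.norm_eq_abs] using g.le_opNorm (x - u))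
      have h4 : r ≤ ‖g‖ * ‖x - u‖ := le_trans h2 h3
      calc ENNReal.ofReal r ≤ ENNReal.ofReal (‖g‖ * ‖x - u‖) := ENNReal.ofReal_le_ofReal h4
        _ = ENNReal.ofReal ‖g‖ * ENNReal.ofReal ‖x - u‖ := ENNReal.ofReal_mul (norm_nonneg g)
        _ = ENNReal.ofReal ‖g‖ * edist x u := by rw [edist_dist, dist_eq_norm]
    have hg0 : ENNReal.ofReal ‖g‖ ≠ 0 := by
      obtain ⟨u0, hu0⟩ := hSne
      intro h0
      have := key u0 hu0
      rw [h0, zero_mul, nonpos_iff_eq_zero, ENNReal.ofReal_eq_zero] at this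
      linarith
    have hkey2 : ENNReal.ofReal r ≤ ENNReal.ofReal ‖g‖ * D := by
      have hdiv : ENNReal.ofReal r / ENNReal.ofReal ‖g‖ ≤ D :=
        le_infEdist.mpr fun u hu =>
          (ENNReal.div_le_iff hg0 ENNReal.ofReal_ne_top).mpr
            (by rw [mul_comm]; exact key u hu)
      have := (ENNReal.div_le_iff hg0 ENNReal.ofReal_ne_top).mp hdiv
      rwa [mul_comm] at this
    have hD0 : D ≠ 0 := by
      intro h0
      rw [h0, mul_zero, nonpos_iff_eq_zero, ENNReal.ofReal_eq_zero] at hkey2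
      linarith
    have hchain : ENNReal.ofReal τ * D ≤ ENNReal.ofReal ‖g‖ * D := le_trans hEB hkey2
    have := (ENNReal.mul_le_mul_iff_left hD0 hDtop).mp hchain
    have := (ENNReal.ofReal_le_ofReal_iff (norm_nonneg g)).mp this
    exact this
  exact ⟨main, le_iInf fun g => le_iInf fun hg => ENNReal.ofReal_le_ofReal (main g hg)⟩
end

section
/- Let X be a normed vector space, f : X → ℝ ∪ {+∞} convex, x ∈ X with f(x) > 0, τ > 0 and q ∈ (0,1]. If τ · d(x, [f ≤ 0]) ≤ f(x)^q, then every subgradient x* ∈ ∂f(x) satisfies ‖x*‖ ≥ max{ τ · f(x)^{1−q}, τ^{1/q} · d(x, [f ≤ 0])^{1/q − 1} }. -/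
open EMetric ENNReal

/-- `d(0, ∂f(x)) = inf {‖x*‖ : x* ∈ ∂f(x)}`, `+∞` if `∂f(x) = ∅`. -/
noncomputable def dSub {X : Type*} [NormedAddCommGroup X] [NormedSpace ℝ X]
    (f : X → EReal) (x : X) : ℝ≥0∞ :=
  ⨅ g ∈ ESubdiff f x, ENNReal.ofReal ‖g‖

/-- if `f` is convex, `f(x) > 0`, `τ > 0`, `q ∈ (0,1]` and
`τ · d(x,[f ≤ 0]) ≤ f(x)^q`, then every `x* ∈ ∂f(x)` satisfies
`‖x*‖ ≥ max{ τ f(x)^{1−q}, τ^{1/q} d(x,[f≤0])^{1/q−1} }`. -/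
theorem stmt_1 {X : Type*} [NormedAddCommGroup X] [NormedSpace ℝ X]
    (f : X → EReal) (hbot : ∀ u, f u ≠ ⊥) (hconv : EConvexOn f)
    (x : X) (hx : 0 < f x) (τ q : ℝ) (hτ : 0 < τ) (hq0 : 0 < q) (hq1 : q ≤ 1)
    (hEB : ENNReal.ofReal τ * EMetric.infEdist x {u | f u ≤ 0} ≤ (f x).toENN ^ q) :
    ∀ g ∈ ESubdiff f x,
      max (ENNReal.ofReal τ * (f x).toENN ^ (1 - q))
          ((ENNReal.ofReal τ) ^ (1 / q) *
            (EMetric.infEdist x {u | f u ≤ 0}) ^ (1 / q - 1))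
        ≤ ENNReal.ofReal ‖g‖ := by

  intro g hg
  -- `f x ≠ ⊤`, otherwise the subdifferential condition at `u = x` fails
  have hxt : f x ≠ ⊤ := by
    intro h
    have h0 := hg x
    rw [h] at h0
    simp at h0
  set r : ℝ := (f x).toReal with hrdef
  have hfx : f x = (r : EReal) := (EReal.coe_toReal hxt (hbot x)).symm
  have hr : 0 < r := by
    have := hx
    rw [hfx] at this
    exact_mod_cast this
  have hkey : ∀ u : X, f u ≤ 0 → r ≤ ‖g‖ * ‖u - x‖ := by
    intro u hu
    have h1 := hg u
    have hut : f u ≠ ⊤ := by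
      intro h
      rw [h] at hu
      exact absurd hu (by simp)
    have hfu : f u = ((f u).toReal : EReal) := (EReal.coe_toReal hut (hbot u)).symm
    rw [hfu, hfx] at h1
    rw [← EReal.coe_sub] at h1
    have h2 : g (u - x) ≤ (f u).toReal - r := by exact_mod_cast h1
    have hs : (f u).toReal ≤ 0 := by
      rw [hfu] at hu
      exact_mod_cast hu
    have h3 : r ≤ -g (u - x) := by linarith
    calc r ≤ -g (u - x) := h3
      _ ≤ |g (u - x)| := neg_le_abs _
      _ = ‖g (u - x)‖ := (Real.norm_eq_abs _).symm
      _ ≤ ‖g‖ * ‖u - x‖ := g.le_opNorm _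
  set E := EMetric.infEdist x {u | f u ≤ 0} with hEdef
  have htoENN : (f x).toENN = ENNReal.ofReal r := by
    unfold EReal.toENN
    rw [if_neg hxt]
  have hfin : (f x).toENN ^ q ≠ ⊤ := by
    rw [htoENN]
    exact ENNReal.rpow_ne_top_of_nonneg hq0.le ENNReal.ofReal_ne_top
  have hτ0 : ENNReal.ofReal τ ≠ 0 := (ENNReal.ofReal_pos.mpr hτ).ne'
  have hEtop : E ≠ ⊤ := by
    intro h
    rw [h, ENNReal.mul_top hτ0] at hEB
    exact hfin (top_le_iff.mp hEB)
  have hSne : {u | f u ≤ 0}.Nonempty := by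
    by_contra h
    rw [Set.not_nonempty_iff_eq_empty] at h
    rw [hEdef, h, EMetric.infEdist, EMetric.infEdist_empty] at hEtop
    exact hEtop rfl
  have hg0 : 0 < ‖g‖ := by
    obtain ⟨u, hu⟩ := hSne
    have h1 := hkey u hu
    nlinarith [norm_nonneg (u - x), norm_nonneg g]
  set D : ℝ := E.toReal with hDdef
  have hED : E = ENNReal.ofReal D := (ENNReal.ofReal_toReal hEtop).symm
  have hrD : r ≤ ‖g‖ * D := by
    have h1 : ENNReal.ofReal (r / ‖g‖) ≤ E := by
      rw [hEdef, EMetric.infEdist, le_infEdist]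
      intro u hu
      rw [edist_dist]
      apply ENNReal.ofReal_le_ofReal
      rw [div_le_iff₀ hg0, dist_eq_norm, norm_sub_rev, mul_comm]
      exact hkey u hu
    rw [hED] at h1
    have h2 : r / ‖g‖ ≤ D := by
      exact (ENNReal.ofReal_le_ofReal_iff ENNReal.toReal_nonneg).mp h1
    rw [div_le_iff₀ hg0] at h2
    linarith [h2]
  have hD0 : 0 < D := by nlinarith
  have hτD : τ * D ≤ r ^ q := by
    rw [htoENN, hED, ← ENNReal.ofReal_mul hτ.le,
      ENNReal.ofReal_rpow_of_pos hr] at hEB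
    exact (ENNReal.ofReal_le_ofReal_iff (Real.rpow_nonneg hr.le q)).mp hEB
  -- real-valued versions of the two bounds
  have hrq : r ^ q * r ^ (1 - q) = r := by
    rw [← Real.rpow_add hr]
    norm_num
  have bound1 : τ * r ^ (1 - q) ≤ ‖g‖ := by
    have h1 : τ * r ^ (1 - q) * D ≤ ‖g‖ * D := by
      calc τ * r ^ (1 - q) * D = (τ * D) * r ^ (1 - q) := by ring
        _ ≤ r ^ q * r ^ (1 - q) :=
            mul_le_mul_of_nonneg_right hτD (Real.rpow_nonneg hr.le _)
        _ = r := hrq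
        _ ≤ ‖g‖ * D := hrD
    exact le_of_mul_le_mul_right h1 hD0
  have bound2 : τ ^ (1 / q) * D ^ (1 / q - 1) ≤ ‖g‖ := by
    have hq' : q * (1 / q) = 1 := by field_simp
    have h1 : τ ^ (1 / q) * D ^ (1 / q - 1) * D ≤ ‖g‖ * D := by
      calc τ ^ (1 / q) * D ^ (1 / q - 1) * D
          = τ ^ (1 / q) * (D ^ (1 / q - 1) * D ^ (1 : ℝ)) := by
            rw [Real.rpow_one]; ring
        _ = τ ^ (1 / q) * D ^ (1 / q) := by
            rw [← Real.rpow_add hD0]; norm_num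
        _ = (τ * D) ^ (1 / q) := (Real.mul_rpow hτ.le hD0.le).symm
        _ ≤ (r ^ q) ^ (1 / q) :=
            Real.rpow_le_rpow (by positivity) hτD (by positivity)
        _ = r := by rw [← Real.rpow_mul hr.le, hq', Real.rpow_one]
        _ ≤ ‖g‖ * D := hrD
    exact le_of_mul_le_mul_right h1 hD0
  -- assemble
  rw [htoENN, hED]
  apply max_le
  · rw [ENNReal.ofReal_rpow_of_pos hr, ← ENNReal.ofReal_mul hτ.le]
    exact ENNReal.ofReal_le_ofReal bound1
  · rw [ENNReal.ofReal_rpow_of_pos hτ, ENNReal.ofReal_rpow_of_pos hD0,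
      ← ENNReal.ofReal_mul (Real.rpow_nonneg hτ.le _)]
    exact ENNReal.ofReal_le_ofReal bound2
end

section
/- Let f : ℝ → ℝ ∪ {+∞} be lower semicontinuous, x̄ ∈ [f ≤ 0], and suppose ψ : ℝ → ℝ ∪ {+∞} is differentiable at f(x̄) with ψ′(f(x̄)) > 0 and nondecreasing on [f(x̄), +∞). Then the Fréchet subdifferential satisfies ∂(ψ ∘ f)(x̄) = ψ′(f(x̄)) · ∂f(x̄) (as sets of subgradients scaled by the scalar ψ′(f(x̄))). -/
open Set

/-- The Fréchet subdifferential of an `EReal`-valued function: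
`x* ∈ ∂f(x)` iff `liminf_{y→x} (f(y) − f(x) − ⟨x*, y−x⟩)/‖y−x‖ ≥ 0`, i.e.
for every `ε > 0`, `f(y) ≥ f(x) + ⟨x*, y−x⟩ − ε‖y−x‖` for `y` near `x`. -/
def FSubdiff {X : Type*} [NormedAddCommGroup X] [NormedSpace ℝ X]
    (f : X → EReal) (x : X) : Set (X →L[ℝ] ℝ) :=
  {g | ∀ ε : ℝ, 0 < ε → ∃ δ > 0, ∀ y : X, ‖y - x‖ < δ →
      f x + ((g (y - x) - ε * ‖y - x‖ : ℝ) : EReal) ≤ f y}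

/-- Composition `ψ ∘ f` for `f : X → ℝ ∪ {+∞}` and `ψ : ℝ → ℝ`,
extended by `ψ(+∞) = +∞`. -/
noncomputable def compPsi {X : Type*} (ψ : ℝ → ℝ) (f : X → EReal) (x : X) : EReal :=
  if f x = ⊤ then (⊤ : EReal) else ((ψ (f x).toReal : ℝ) : EReal)

private lemma deriv_bound {ψ : ℝ → ℝ} {c a : ℝ} (hψ : HasDerivAt ψ c a)
    {ε : ℝ} (hε : 0 < ε) :
    ∃ δ > 0, ∀ t : ℝ, |t - a| < δ → |ψ t - ψ a - c * (t - a)| ≤ ε * |t - a| := by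
  have h2 := (Asymptotics.isLittleO_iff.mp (hasDerivAt_iff_isLittleO.mp hψ)) hε
  rw [Metric.eventually_nhds_iff] at h2
  obtain ⟨δ, hδ, H⟩ := h2
  refine ⟨δ, hδ, fun t ht => ?_⟩
  have := H (show dist t a < δ by simpa [Real.dist_eq] using ht)
  simpa [Real.norm_eq_abs, smul_eq_mul, mul_comm] using this

set_option maxHeartbeats 2000000 in
/-- chain rule: if `f` is lsc, `x̄ ∈ [f ≤ 0]`, `ψ` is differentiable
at `f(x̄)` with `ψ'(f(x̄)) > 0` and nondecreasing on `[f(x̄), +∞)`, then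
`∂(ψ ∘ f)(x̄) = ψ'(f(x̄)) · ∂f(x̄)`. -/
theorem stmt_2 {X : Type*} [NormedAddCommGroup X] [NormedSpace ℝ X]
    (f : X → EReal) (hbot : ∀ u, f u ≠ ⊥) (hf : LowerSemicontinuous f)
    (xbar : X) (hxbar : f xbar ≤ 0)
    (ψ : ℝ → ℝ) (c : ℝ) (hψ : HasDerivAt ψ c ((f xbar).toReal)) (hc : 0 < c)
    (hmono : MonotoneOn ψ (Set.Ici ((f xbar).toReal))) :
    FSubdiff (compPsi ψ f) xbar = (fun g : X →L[ℝ] ℝ => c • g) '' FSubdiff f xbar := by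
  have hxtop : f xbar ≠ ⊤ := fun h => by simp [h] at hxbar
  set a := (f xbar).toReal with ha
  have hfx : f xbar = (a : EReal) := (EReal.coe_toReal hxtop (hbot xbar)).symm
  have hcomp_x : compPsi ψ f xbar = ((ψ a : ℝ) : EReal) := by simp [compPsi, hxtop]; rfl
  apply Set.Subset.antisymm
  · -- FSubdiff (compPsi ψ f) xbar ⊆ c • FSubdiff f xbar
    intro g hg
    set h : X →L[ℝ] ℝ := c⁻¹ • g with hh
    refine ⟨h, ?_, ?_⟩
    swap
    · simp only [hh, smul_smul, mul_inv_cancel₀ hc.ne', one_smul]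
    intro ε hε
    set N := ‖h‖ with hN
    have hN0 : (0:ℝ) ≤ N := norm_nonneg _
    set ε' : ℝ := min (c/2) (c*ε/(4*(N+1))) with hε'
    have hε'pos : 0 < ε' := lt_min (by linarith) (by positivity)
    have hε'c : ε' ≤ c/2 := min_le_left _ _
    have hε'N : ε' * (N+1) ≤ c*ε/4 := by
      have hm := min_le_right (c/2) (c*ε/(4*(N+1)))
      have hN1 : (0:ℝ) < N + 1 := by linarith
      calc ε' * (N+1) ≤ (c*ε/(4*(N+1))) * (N+1) := by
            apply mul_le_mul_of_nonneg_right hm hN1.le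
        _ = c*ε/4 := by field_simp
    clear_value N ε'
    obtain ⟨δ₁, hδ₁pos, hd⟩ := deriv_bound hψ hε'pos
    -- lsc bound
    have hlsc := hf xbar (((a - δ₁/2 : ℝ) : EReal))
      (by show ((a - δ₁/2 : ℝ) : EReal) < f xbar; rw [hfx]; exact_mod_cast (by linarith : a - δ₁/2 < a))
    rw [Metric.eventually_nhds_iff] at hlsc
    obtain ⟨δl, hδlpos, hlsc⟩ := hlsc
    obtain ⟨δg, hδgpos, hgd⟩ := hg (c*ε/4) (by positivity)
    refine ⟨min δg (min δl (δ₁/(2*(N+1)))), by positivity, fun y hy => ?_⟩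
    set s := ‖y - xbar‖ with hs
    have hs0 : (0:ℝ) ≤ s := norm_nonneg _
    have hsδg : s < δg := lt_of_lt_of_le hy (min_le_left _ _)
    have hsδl : s < δl := lt_of_lt_of_le hy ((min_le_right _ _).trans (min_le_left _ _))
    have hsδ1 : s < δ₁/(2*(N+1)) :=
      lt_of_lt_of_le hy ((min_le_right _ _).trans (min_le_right _ _))
    by_cases hyt : f y = ⊤
    · rw [hyt]; exact le_top
    set t := (f y).toReal with ht
    have hfy : f y = (t : EReal) := (EReal.coe_toReal hyt (hbot y)).symm
    set hv := h (y - xbar) with hhv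
    have hgv : g (y - xbar) = c * hv := by
      simp only [hhv, hh, ContinuousLinearMap.smul_apply, smul_eq_mul]
      field_simp
    have habs : |hv| ≤ N * s := by
      rw [hN, hs]
      calc |hv| = ‖h (y - xbar)‖ := (Real.norm_eq_abs _).symm
        _ ≤ ‖h‖ * ‖y - xbar‖ := h.le_opNorm _
    -- subgradient inequality in ℝ
    have hsub : ψ a + (c * hv - (c*ε/4) * s) ≤ ψ t := by
      have := hgd y hsδg
      rw [hcomp_x, compPsi, if_neg hyt, ← ht, ← EReal.coe_add, EReal.coe_le_coe_iff, hgv] at this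
      linarith [this]
    -- lsc lower bound on t
    have hlow : a - δ₁/2 < t := by
      have := hlsc (show dist y xbar < δl by rwa [dist_eq_norm])
      change f y > _ at this
      rw [hfy] at this
      exact_mod_cast this
    -- goal in ℝ
    rw [hfx, hfy, ← EReal.coe_add, EReal.coe_le_coe_iff]
    have hvN : hv ≤ N * s := (le_abs_self _).trans habs
    have hvN' : -(N*s) ≤ hv := by linarith [neg_abs_le hv, habs]
    have hN1 : (0:ℝ) < N + 1 := by linarith
    clear_value s t hv a
    by_cases hcase : a + δ₁/2 ≤ t
    · -- t is far above a; trivial since hv - ε*s is small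
      have h1 : (N+1)*s < δ₁/2 := by
        have h2 := mul_lt_mul_of_pos_left hsδ1 hN1
        calc (N+1)*s < (N+1)*(δ₁/(2*(N+1))) := h2
          _ = δ₁/2 := by field_simp
      nlinarith [mul_nonneg hε.le hs0]
    · push_neg at hcase
      have habt : |t - a| < δ₁ := abs_lt.mpr ⟨by linarith, by linarith⟩
      have hdb : ψ t - ψ a - c * (t - a) ≤ ε' * |t - a| := (le_abs_self _).trans (hd t habt)
      have key : c * hv - (c*ε/4) * s ≤ c * (t - a) + ε' * |t - a| := by linarith
      rcases le_or_gt a t with hta | hta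
      · rw [abs_of_nonneg (by linarith : (0:ℝ) ≤ t - a)] at key
        have p1 : ε' * hv ≤ c*ε/4 * s := by
          nlinarith [mul_le_mul_of_nonneg_left hvN hε'pos.le,
            mul_le_mul_of_nonneg_right hε'N hs0, mul_nonneg hε'pos.le hs0]
        have hmul : (c+ε') * (hv - ε * s) ≤ (c+ε') * (t - a) := by
          nlinarith [mul_nonneg hc.le (mul_nonneg hε.le hs0),
            mul_nonneg hε'pos.le (mul_nonneg hε.le hs0)]
        have hfin := le_of_mul_le_mul_left hmul (by linarith : (0:ℝ) < c + ε')
        linarith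
      · rw [abs_of_neg (by linarith : t - a < 0)] at key
        have p1 : -(c*ε/4 * s) ≤ ε' * hv := by
          nlinarith [mul_le_mul_of_nonneg_left hvN' hε'pos.le,
            mul_le_mul_of_nonneg_right hε'N hs0, mul_nonneg hε'pos.le hs0]
        have hmul : (c-ε') * (hv - ε * s) ≤ (c-ε') * (t - a) := by
          nlinarith [mul_nonneg hc.le (mul_nonneg hε.le hs0),
            mul_nonneg hε'pos.le (mul_nonneg hε.le hs0)]
        have hfin := le_of_mul_le_mul_left hmul (by linarith : (0:ℝ) < c - ε')
        linarith
  · -- c • FSubdiff f xbar ⊆ FSubdiff (compPsi ψ f) xbar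
    rintro _ ⟨g, hg, rfl⟩
    intro ε hε
    set εf : ℝ := ε/(2*c) with hεf
    have hεfpos : 0 < εf := by positivity
    set M : ℝ := ‖g‖ + εf + 1 with hM
    have hM0 : (0:ℝ) < M := by positivity
    set ε' : ℝ := ε/(2*M) with hε'
    have hε'pos : 0 < ε' := by positivity
    have eμ1 : c * εf = ε/2 := by rw [hεf]; field_simp
    have eμ2 : ε' * M = ε/2 := by rw [hε']; field_simp
    clear_value εf M ε'
    obtain ⟨δ₁, hδ₁pos, hd⟩ := deriv_bound hψ hε'pos
    obtain ⟨δg, hδgpos, hgd⟩ := hg εf hεfpos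
    refine ⟨min δg (δ₁/M), lt_min hδgpos (div_pos hδ₁pos hM0), fun y hy => ?_⟩
    set s := ‖y - xbar‖ with hs
    have hs0 : (0:ℝ) ≤ s := norm_nonneg _
    have hsδg : s < δg := lt_of_lt_of_le hy (min_le_left _ _)
    have hsδ1 : M * s < δ₁ := by
      have h2 : s < δ₁/M := lt_of_lt_of_le hy (min_le_right _ _)
      calc M * s < M * (δ₁/M) := mul_lt_mul_of_pos_left h2 hM0
        _ = δ₁ := by field_simp
    by_cases hyt : f y = ⊤
    · have hty : compPsi ψ f y = ⊤ := by rw [compPsi, if_pos hyt]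
      rw [hty]; exact le_top
    set t := (f y).toReal with ht
    have hfy : f y = (t : EReal) := (EReal.coe_toReal hyt (hbot y)).symm
    set gv := g (y - xbar) with hgv
    have habs : |gv| ≤ ‖g‖ * s := by
      calc |gv| = ‖g (y - xbar)‖ := (Real.norm_eq_abs _).symm
        _ ≤ ‖g‖ * s := g.le_opNorm _
    have hgN : gv ≤ ‖g‖ * s := (le_abs_self _).trans habs
    have hgN' : -(‖g‖*s) ≤ gv := by linarith [neg_abs_le gv, habs]
    -- subgradient inequality in ℝ
    have hsub : a + (gv - εf * s) ≤ t := by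
      have h2 := hgd y hsδg
      rw [hfx, hfy, ← EReal.coe_add, EReal.coe_le_coe_iff] at h2
      linarith [h2]
    -- the truncated value
    set tt : ℝ := min t (a + M * s) with htt
    have hNg0 : (0:ℝ) ≤ ‖g‖ := norm_nonneg _
    have htt1 : gv - εf * s ≤ tt - a := by
      rcases min_cases t (a + M*s) with ⟨h1, _⟩ | ⟨h1, _⟩
      · rw [htt, h1]; linarith
      · rw [htt, h1]
        have : gv - εf * s ≤ M * s := by
          have : (‖g‖ + εf) * s ≤ M * s := by
            apply mul_le_mul_of_nonneg_right _ hs0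
            simp [hM]
          nlinarith [mul_nonneg hεfpos.le hs0]
        linarith
    have htt2 : |tt - a| ≤ M * s := by
      rw [abs_le]
      constructor
      · have : -(M*s) ≤ gv - εf * s := by
          have h3 : (‖g‖ + εf) * s ≤ M * s := by
            apply mul_le_mul_of_nonneg_right _ hs0
            simp [hM]
          nlinarith
        linarith
      · have : tt ≤ a + M * s := min_le_right _ _
        linarith
    have htt3 : ψ tt ≤ ψ t := by
      rcases min_cases t (a + M*s) with ⟨h1, _⟩ | ⟨h1, h2⟩
      · rw [htt, h1]
      · rw [htt, h1]
        have hmem1 : a + M * s ∈ Set.Ici a := by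
          simp only [Set.mem_Ici]
          nlinarith
        have hmem2 : t ∈ Set.Ici a := by
          simp only [Set.mem_Ici]
          nlinarith [Set.mem_Ici.mp hmem1]
        exact hmono hmem1 hmem2 h2.le
    have hdb : |ψ tt - ψ a - c * (tt - a)| ≤ ε' * |tt - a| :=
      hd tt (lt_of_le_of_lt htt2 hsδ1)
    have hdb2 : ψ a + c * (tt - a) - ε' * |tt - a| ≤ ψ tt := by
      have := neg_abs_le (ψ tt - ψ a - c * (tt - a))
      linarith [(abs_le.mp hdb).1]
    -- goal in ℝ
    rw [hcomp_x, compPsi, if_neg hyt, ← ht, ← EReal.coe_add, EReal.coe_le_coe_iff]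
    have hcgv : ((c • g) (y - xbar) : ℝ) = c * gv := by
      simp [hgv, smul_eq_mul]
    rw [hcgv]
    clear_value a s t gv tt
    have e1 : c * (tt - a) ≥ c * (gv - εf * s) := mul_le_mul_of_nonneg_left htt1 hc.le
    have e2 : ε' * |tt - a| ≤ ε' * (M * s) := mul_le_mul_of_nonneg_left htt2 hε'pos.le
    have e3 : c * (gv - εf * s) = c * gv - (ε/2) * s := by
      rw [mul_sub]
      rw [show c * (εf * s) = (c * εf) * s by ring, eμ1]
    have e4 : ε' * (M * s) = (ε/2) * s := by
      rw [show ε' * (M * s) = (ε' * M) * s by ring, eμ2]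
    have f1 : c * (tt - a) ≥ c * gv - ε/2 * s := by linarith [e1, e3]
    have f2 : ε' * |tt - a| ≤ ε/2 * s := by linarith [e2, e4]
    have f3 : ψ a + (c * gv - ε * s) ≤ ψ tt := by linarith [hdb2, f1, f2]
    linarith [f3, htt3]
end

section
/- Let X be a Banach space, f : X → ℝ ∪ {+∞} convex lower semicontinuous, and x̄ ∈ [f ≤ 0]. Suppose there exist τ > 0 and δ > 0 such that τ d(x, [f ≤ 0]) ≤ f₊(x) for all x ∈ B_δ(x̄). Then d(0, ∂f(x)) ≥ τ for all x ∈ B_δ(x̄) with f(x) > 0, where ∂f is the convex subdifferential. -/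
open EMetric ENNReal

/-- if `f` is convex lsc, `x̄ ∈ [f ≤ 0]` and
`τ d(x,[f≤0]) ≤ f₊(x)` on `B_δ(x̄)`, then `d(0,∂f(x)) ≥ τ` for all
`x ∈ B_δ(x̄)` with `f(x) > 0`. -/
theorem stmt_7 {X : Type*} [NormedAddCommGroup X] [NormedSpace ℝ X] [CompleteSpace X]
    (f : X → EReal) (hbot : ∀ u, f u ≠ ⊥) (hconv : EConvexOn f)
    (hlsc : LowerSemicontinuous f)
    (xbar : X) (hxbar : f xbar ≤ 0) (τ δ : ℝ) (hτ : 0 < τ) (hδ : 0 < δ)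
    (hEB : ∀ x : X, dist x xbar < δ →
      ENNReal.ofReal τ * EMetric.infEdist x {u | f u ≤ 0} ≤ (f x).toENN) :
    ∀ x : X, dist x xbar < δ → 0 < f x → ENNReal.ofReal τ ≤ dSub f x := by
  intro x hx hfx
  refine le_iInf₂ fun g hg => ENNReal.ofReal_le_ofReal ?_
  by_cases htop : f x = ⊤
  · exfalso
    have h := hg xbar
    rw [htop] at h
    have hb : f xbar - ⊤ = ⊥ := by
      simp [sub_eq_add_neg]
    rw [hb, le_bot_iff] at h
    exact EReal.coe_ne_bot _ h
  · set r := (f x).toReal with hr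
    have hfxr : f x = (r : EReal) := (EReal.coe_toReal htop (hbot x)).symm
    have hrpos : 0 < r := by
      have h0 := hfx; rw [hfxr] at h0; exact_mod_cast h0
    have key : ∀ u ∈ {u : X | f u ≤ 0}, r ≤ ‖g‖ * dist x u := by
      intro u hu
      have h1 := hg u
      rw [hfxr] at h1
      have h2 : f u - (r : EReal) ≤ ((-r : ℝ) : EReal) := by
        calc f u - (r : EReal) ≤ 0 - (r : EReal) := by
              exact EReal.sub_le_sub hu le_rfl
          _ = ((-r : ℝ) : EReal) := by
              rw [show ((-r : ℝ) : EReal) = ((0 - r : ℝ) : EReal) by norm_num]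
              rw [EReal.coe_sub]; norm_num
      have h3 : g (u - x) ≤ -r := by exact_mod_cast h1.trans h2
      have h4 : r ≤ g (x - u) := by
        have he : g (x - u) = - g (u - x) := by
          rw [← map_neg]; congr 1; abel
        rw [he]; linarith
      calc r ≤ g (x - u) := h4
        _ ≤ ‖g‖ * ‖x - u‖ := (le_abs_self _).trans (g.le_opNorm _)
        _ = ‖g‖ * dist x u := by rw [dist_eq_norm]
    have hgpos : 0 < ‖g‖ := by
      have h := key xbar hxbar
      nlinarith [dist_nonneg (x := x) (y := xbar), norm_nonneg g]
    -- infEdist is finite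
    set S : Set X := {u : X | f u ≤ 0} with hS
    have hSne : S.Nonempty := ⟨xbar, hxbar⟩
    have hDne : infEdist x S ≠ ⊤ := Metric.infEdist_ne_top hSne
    set d : ℝ := (infEdist x S).toReal with hd
    have hdnn : 0 ≤ d := ENNReal.toReal_nonneg
    have hD : infEdist x S = ENNReal.ofReal d := (ENNReal.ofReal_toReal hDne).symm
    -- r / ‖g‖ ≤ d
    have hled : r / ‖g‖ ≤ d := by
      have h1 : ENNReal.ofReal (r / ‖g‖) ≤ infEdist x S := by
        refine le_infEdist.2 ?_
        intro y hy
        rw [edist_dist]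
        exact ENNReal.ofReal_le_ofReal ((div_le_iff₀ hgpos).2 (by linarith [key y hy]))
      rw [hD] at h1
      exact (ENNReal.ofReal_le_ofReal_iff hdnn).1 h1
    -- error bound gives τ * d ≤ r
    have hEB' := hEB x hx
    rw [hD, show (f x).toENN = ENNReal.ofReal r by rw [EReal.toENN, if_neg htop],
      ← ENNReal.ofReal_mul hτ.le] at hEB'
    have hτd : τ * d ≤ r := (ENNReal.ofReal_le_ofReal_iff hrpos.le).1 hEB'
    have hdpos : 0 < d := lt_of_lt_of_le (div_pos hrpos hgpos) hled
    have hrg : r ≤ ‖g‖ * d := (div_le_iff₀' hgpos).1 hled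
    nlinarith
end

section
/- Let X be a Banach space and f : X → ℝ ∪ {+∞} convex lower semicontinuous with x̄ ∈ [f ≤ 0]. Then the following are equivalent: (i) there exist τ > 0, δ > 0 with τ d(x, [f ≤ 0]) ≤ f₊(x) for all x ∈ B_δ(x̄); (ii) liminf over x → x̄ with f(x) > 0 of d(0, ∂f(x)) is strictly positive. -/
open EMetric ENNReal

open Filter

lemma EReal.toENN_top : (⊤ : EReal).toENN = ⊤ := by simp [EReal.toENN]

lemma EReal.toENN_ne_top {a : EReal} (h : a ≠ ⊤) : a.toENN = ENNReal.ofReal a.toReal :=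
  if_neg h

lemma EReal.toENN_coe (r : ℝ) : EReal.toENN (r : EReal) = ENNReal.ofReal r := by
  simp [EReal.toENN]

lemma EReal.toENN_mono {a b : EReal} (h : a ≤ b) : a.toENN ≤ b.toENN := by
  rcases eq_or_ne b ⊤ with rfl | hb
  · simp [EReal.toENN]
  rcases eq_or_ne a ⊥ with rfl | ha
  · simp [EReal.toENN, hb]
  have ha' : a ≠ ⊤ := fun h' => hb (top_le_iff.1 (h' ▸ h))
  simp only [EReal.toENN, if_neg hb, if_neg ha']
  exact ENNReal.ofReal_le_ofReal (EReal.toReal_le_toReal h ha hb)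

-- coe bound from toENN bound
lemma le_coe_of_toENN_le {x : EReal} {a : ℝ} (hx : x ≠ ⊥) (ha : 0 ≤ a)
    (h : x.toENN ≤ ENNReal.ofReal a) : x ≤ (a : EReal) := by
  rcases eq_or_ne x ⊤ with rfl | hxt
  · rw [EReal.toENN_top, top_le_iff] at h
    exact absurd h ENNReal.ofReal_ne_top
  lift x to ℝ using ⟨hxt, hx⟩
  rw [EReal.toENN_coe] at h
  exact_mod_cast (ENNReal.ofReal_le_ofReal_iff ha).1 h

-- lsc of toENN ∘ f
lemma lsc_toENN {X : Type*} [TopologicalSpace X] {f : X → EReal}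
    (hbot : ∀ u, f u ≠ ⊥) (hlsc : LowerSemicontinuous f) :
    LowerSemicontinuous fun z => (f z).toENN := by
  intro x c hc
  change c < (f x).toENN at hc
  rcases eq_or_ne (f x) ⊤ with htop | htop
  · have hcne : c ≠ ⊤ := by
      rw [htop, EReal.toENN_top] at hc
      exact hc.ne
    set M : ℝ := c.toReal + 1 with hM
    have hcM : c < ENNReal.ofReal M := by
      rw [hM]
      exact ENNReal.lt_ofReal_iff_toReal_lt hcne |>.2 (by linarith)
    have hMf : ((M : ℝ) : EReal) < f x := htop ▸ EReal.coe_lt_top M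
    filter_upwards [hlsc x M hMf] with z hz
    calc c < ENNReal.ofReal M := hcM
      _ = EReal.toENN (M : EReal) := (EReal.toENN_coe M).symm
      _ ≤ (f z).toENN := EReal.toENN_mono hz.le
  · set r : ℝ := (f x).toReal with hr
    have hfx : f x = (r : EReal) := (EReal.coe_toReal htop (hbot x)).symm
    rw [EReal.toENN_ne_top htop] at hc
    have hcne : c ≠ ⊤ := hc.ne_top
    have hcr : c.toReal < r := by
      have h1 : c.toReal < (ENNReal.ofReal r).toReal :=
        ENNReal.toReal_lt_toReal hcne ENNReal.ofReal_ne_top |>.2 hc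
      rw [ENNReal.toReal_ofReal (le_of_lt ?hr0)] at h1
      · exact h1
      case hr0 =>
        by_contra hr0
        push_neg at hr0
        rw [ENNReal.ofReal_eq_zero.2 hr0] at hc
        exact absurd hc (not_lt_of_ge zero_le)
    obtain ⟨q, hq1, hq2⟩ := exists_between hcr
    have hq0 : 0 < q := lt_of_le_of_lt ENNReal.toReal_nonneg hq1
    have hqf : ((q : ℝ) : EReal) < f x := by rw [hfx]; exact_mod_cast hq2
    filter_upwards [hlsc x q hqf] with z hz
    calc c = ENNReal.ofReal c.toReal := (ENNReal.ofReal_toReal hcne).symm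
      _ < ENNReal.ofReal q := ENNReal.ofReal_lt_ofReal_iff hq0 |>.2 hq1
      _ = EReal.toENN (q : EReal) := (EReal.toENN_coe q).symm
      _ ≤ (f z).toENN := EReal.toENN_mono hz.le

-- EReal scalar bound
lemma ereal_mul_le {s a : ℝ} {x : EReal} (hs : 0 ≤ s) (hx : x ≠ ⊥) (hxt : x ≠ ⊤)
    (h : x ≤ (a : EReal)) : (s : EReal) * x ≤ ((s * a : ℝ) : EReal) := by
  lift x to ℝ using ⟨hxt, hx⟩
  rw [← EReal.coe_mul]
  exact_mod_cast mul_le_mul_of_nonneg_left (by exact_mod_cast h) hs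

-- convexity transfer
lemma conv_transfer {X : Type*} [NormedAddCommGroup X] [NormedSpace ℝ X]
    {f : X → EReal} (hbot : ∀ u, f u ≠ ⊥) (hconv : EConvexOn f) :
    ∀ (u v : X) (t a b : ℝ), 0 ≤ t → t ≤ 1 → 0 ≤ a → 0 ≤ b →
      (f u).toENN ≤ ENNReal.ofReal a → (f v).toENN ≤ ENNReal.ofReal b →
      (f (t • u + (1 - t) • v)).toENN ≤ ENNReal.ofReal (t * a + (1 - t) * b) := by
  intro u v t a b ht ht1 ha hb hu hv
  have hut : f u ≠ ⊤ := by
    intro h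
    rw [h, EReal.toENN_top, top_le_iff] at hu
    exact ENNReal.ofReal_ne_top hu
  have hvt : f v ≠ ⊤ := by
    intro h
    rw [h, EReal.toENN_top, top_le_iff] at hv
    exact ENNReal.ofReal_ne_top hv
  have hua : f u ≤ (a : EReal) := le_coe_of_toENN_le (hbot u) ha hu
  have hvb : f v ≤ (b : EReal) := le_coe_of_toENN_le (hbot v) hb hv
  have h1 : f (t • u + (1 - t) • v) ≤ ((t * a + (1 - t) * b : ℝ) : EReal) := by
    refine le_trans (hconv u v t ht ht1) ?_
    rw [EReal.coe_add]
    exact add_le_add (ereal_mul_le ht (hbot u) hut hua)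
      (ereal_mul_le (by linarith) (hbot v) hvt hvb)
  calc (f (t • u + (1 - t) • v)).toENN ≤ EReal.toENN ((t * a + (1 - t) * b : ℝ) : EReal) :=
        EReal.toENN_mono h1
    _ = ENNReal.ofReal (t * a + (1 - t) * b) := EReal.toENN_coe _

-- subdifferential conversion
lemma subdiff_conv {X : Type*} [NormedAddCommGroup X] [NormedSpace ℝ X]
    {f : X → EReal} (hbot : ∀ u, f u ≠ ⊥) (hconv : EConvexOn f)
    (y : X) (c : ℝ) (hc : 0 < c) (hfy : f y = (c : EReal)) (g : X →L[ℝ] ℝ)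
    (hg : ∀ z, ENNReal.ofReal (g (z - y) + c) ≤ (f z).toENN) :
    ∀ u : X, ((g (u - y) : ℝ) : EReal) ≤ f u - f y := by
  intro u
  rcases eq_or_ne (f u) ⊤ with htop | htop
  · rw [htop, hfy, EReal.top_sub_coe]
    exact le_top
  set m : ℝ := (f u).toReal with hm
  have hfu : f u = (m : EReal) := (EReal.coe_toReal htop (hbot u)).symm
  rw [hfu, hfy, ← EReal.coe_sub, EReal.coe_le_coe_iff]
  rcases le_or_gt 0 m with hm0 | hm0
  · have h := hg u
    rw [hfu, EReal.toENN_coe] at h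
    have := (ENNReal.ofReal_le_ofReal_iff hm0).1 h
    linarith
  · -- convexity argument
    have hcm : 0 < c - m := by linarith
    set t : ℝ := c / (c - m) with htdef
    have ht0 : 0 < t := div_pos hc hcm
    have ht1 : t ≤ 1 := by
      rw [div_le_one hcm]; linarith
    have hzt := hconv u y t ht0.le ht1
    rw [hfu, hfy] at hzt
    have hval : (t : EReal) * (m : EReal) + ((1 - t : ℝ) : EReal) * (c : EReal)
        = ((t * m + (1 - t) * c : ℝ) : EReal) := by
      rw [EReal.coe_add, EReal.coe_mul, EReal.coe_mul]
    rw [hval] at hzt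
    have h6 : t * (m - c) = -c := by
      rw [htdef]; field_simp; ring
    have hval0 : t * m + (1 - t) * c = 0 := by nlinarith [h6]
    rw [hval0] at hzt
    have h2 : (f (t • u + (1 - t) • y)).toENN ≤ 0 := by
      calc (f (t • u + (1 - t) • y)).toENN ≤ EReal.toENN ((0 : ℝ) : EReal) :=
            EReal.toENN_mono (by exact_mod_cast hzt)
        _ = 0 := by rw [EReal.toENN_coe]; simp
    have h3 := le_trans (hg (t • u + (1 - t) • y)) h2
    have h4 : g (t • u + (1 - t) • y - y) + c ≤ 0 :=
      ENNReal.ofReal_eq_zero.1 (le_zero_iff.1 h3)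
    have h5 : t • u + (1 - t) • y - y = t • (u - y) := by
      rw [smul_sub]
      match_scalars <;> ring
    rw [h5, map_smul, smul_eq_mul] at h4
    have h7 : t * g (u - y) ≤ t * (m - c) := by rw [h6]; linarith
    exact le_of_mul_le_mul_left h7 ht0


lemma EReal.toENN_pos {a : EReal} (h : 0 < a) : 0 < a.toENN := by
  rcases eq_or_ne a ⊤ with rfl | ha
  · simp [EReal.toENN]
  · simp only [EReal.toENN, if_neg ha]
    refine ENNReal.ofReal_pos.2 ?_
    lift a to ℝ using ⟨ha, ne_bot_of_gt h⟩
    simpa using h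

lemma fwd_bound {X : Type*} [NormedAddCommGroup X] [NormedSpace ℝ X]
    (f : X → EReal) (hbot : ∀ u, f u ≠ ⊥) (hlsc : LowerSemicontinuous f)
    (xbar : X) (hxbar : f xbar ≤ 0) {τ : ℝ} (hτ : 0 < τ) {x : X} (hfx : 0 < f x)
    (hEB : ENNReal.ofReal τ * infEdist x {u | f u ≤ 0} ≤ (f x).toENN)
    (g : X →L[ℝ] ℝ) (hg : ∀ u : X, ((g (u - x) : ℝ) : EReal) ≤ f u - f x) :
    τ ≤ ‖g‖ := by
  classical
  set S : Set X := {u | f u ≤ 0} with hS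
  have hSmem : xbar ∈ S := hxbar
  have hSne : S.Nonempty := ⟨xbar, hSmem⟩
  have hScl : IsClosed S := by
    rw [← isOpen_compl_iff, isOpen_iff_mem_nhds]
    intro z hz
    filter_upwards [hlsc z 0 (lt_of_not_ge hz)] with y hy using not_le_of_gt hy
  -- f x is finite
  rcases eq_or_ne (f x) ⊤ with htop | htop
  · have h1 := hg xbar
    rw [htop, EReal.sub_top] at h1
    exact absurd (le_bot_iff.1 h1) (EReal.coe_ne_bot _)
  have hfxb : f x ≠ ⊥ := hbot x
  set r : ℝ := (f x).toReal with hr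
  have hfxr : f x = (r : EReal) := (EReal.coe_toReal htop hfxb).symm
  have hr0 : 0 < r := by
    rw [hfxr] at hfx; exact_mod_cast hfx
  set d : ℝ≥0∞ := infEdist x S with hd
  have hdle : d ≤ edist x xbar := infEdist_le_edist_of_mem hSmem
  have hdtop : d ≠ ⊤ := (lt_of_le_of_lt hdle (edist_lt_top x xbar)).ne
  have hd0 : d ≠ 0 := by
    intro h0
    have : x ∈ S := by
      rw [← hScl.closure_eq]
      exact EMetric.mem_closure_iff_infEdist_zero.2 h0
    exact absurd hfx (not_lt_of_ge this)
  set D : ℝ := d.toReal with hD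
  have hD0 : 0 < D := ENNReal.toReal_pos hd0 hdtop
  -- τ * D ≤ r
  have hEB' : τ * D ≤ r := by
    have htoenn : (f x).toENN = ENNReal.ofReal r := by rw [EReal.toENN, if_neg htop]
    rw [htoenn] at hEB
    have h1 := ENNReal.toReal_le_toReal (ENNReal.mul_ne_top ENNReal.ofReal_ne_top hdtop)
        ENNReal.ofReal_ne_top |>.mpr hEB
    rwa [ENNReal.toReal_mul, ENNReal.toReal_ofReal hτ.le, ENNReal.toReal_ofReal hr0.le] at h1
  -- r ≤ ‖g‖ * dist x u for u ∈ S
  have hkey : ∀ u ∈ S, r ≤ ‖g‖ * dist x u := by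
    intro u hu
    have h1 := hg u
    have hub : f u ≠ ⊥ := hbot u
    have hut : f u ≠ ⊤ := by
      intro h
      rw [Set.mem_setOf_eq, h] at hu
      exact (by simp : ¬ ((⊤:EReal) ≤ 0)) hu
    set m : ℝ := (f u).toReal with hm
    have hfu : f u = (m : EReal) := (EReal.coe_toReal hut hub).symm
    have hm0 : m ≤ 0 := by
      have := hu; rw [Set.mem_setOf_eq, hfu] at this; exact_mod_cast this
    rw [hfu, hfxr, ← EReal.coe_sub, EReal.coe_le_coe_iff] at h1
    have h2 : r ≤ -(g (u - x)) := by linarith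
    have h3 : -(g (u - x)) = g (x - u) := by rw [← map_neg, neg_sub]
    have h4 : g (x - u) ≤ ‖g‖ * ‖x - u‖ :=
      le_trans (le_abs_self _) (by rw [← Real.norm_eq_abs]; exact g.le_opNorm _)
    rw [← dist_eq_norm] at h4
    linarith
  -- conclude
  have hgn : 0 < ‖g‖ := by
    rcases lt_or_ge 0 ‖g‖ with h | h
    · exact h
    · exfalso
      have := hkey xbar hSmem
      nlinarith [dist_nonneg (x := x) (y := xbar)]
  have hDinf : D = Metric.infDist x S := rfl
  have h5 : r / ‖g‖ ≤ D := by
    rw [hDinf]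
    by_contra hcon
    push_neg at hcon
    obtain ⟨u, hu, hdu⟩ := (Metric.infDist_lt_iff hSne).1 hcon
    have := hkey u hu
    have : r / ‖g‖ ≤ dist x u := by
      rw [div_le_iff₀ hgn]; linarith [hkey u hu, mul_comm ‖g‖ (dist x u)]
    linarith
  have : r ≤ ‖g‖ * D := by
    rw [div_le_iff₀ hgn] at h5
    linarith [h5]
  nlinarith


lemma ofReal_dist_split (σ a b c : ℝ) (hσ : 0 ≤ σ) (hb : 0 ≤ b) (hc : 0 ≤ c) (h : a ≤ b + c) :
    ENNReal.ofReal (σ * a) ≤ ENNReal.ofReal (σ * b) + ENNReal.ofReal (σ * c) := by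
  rw [← ENNReal.ofReal_add (by positivity) (by positivity)]
  exact ENNReal.ofReal_le_ofReal (by nlinarith)

lemma ekeland {X : Type*} [MetricSpace X] [CompleteSpace X] (F : X → ℝ≥0∞)
    (hF : LowerSemicontinuous F) {σ : ℝ} (hσ : 0 < σ) (x : X) (hx : F x ≠ ⊤) :
    ∃ y : X, F y + ENNReal.ofReal (σ * dist y x) ≤ F x ∧
      ∀ z : X, F y ≤ F z + ENNReal.ofReal (σ * dist z y) := by
  classical
  set S : X → Set X := fun w => {z | F z + ENNReal.ofReal (σ * dist z w) ≤ F w} with hSdef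
  have hself : ∀ w, w ∈ S w := by intro w; simp [hSdef]
  have hmemtop : ∀ {w z : X}, F w ≠ ⊤ → z ∈ S w → F z ≠ ⊤ := by
    intro w z hw hz
    exact ne_top_of_le_ne_top hw (le_trans le_self_add hz)
  set ε : ℕ → ℝ≥0∞ := fun n => (2⁻¹ : ℝ≥0∞) ^ n with hε
  have hεne : ∀ n, ε n ≠ 0 := fun n => pow_ne_zero _ (by norm_num)
  have hε0 : Tendsto ε atTop (nhds 0) :=
    ENNReal.tendsto_pow_atTop_nhds_zero_of_lt_one (by norm_num)
  have sel : ∀ (w : {w : X // F w ≠ ⊤}) (n : ℕ),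
      ∃ z : {w : X // F w ≠ ⊤}, (z : X) ∈ S (w : X) ∧
        F (z : X) ≤ (⨅ p ∈ S (w : X), F p) + ε n := by
    rintro ⟨w, hw⟩ n
    have hI : (⨅ p ∈ S w, F p) ≤ F w := iInf₂_le w (hself w)
    have hIne : (⨅ p ∈ S w, F p) ≠ ⊤ := ne_top_of_le_ne_top hw hI
    have hlt : (⨅ p ∈ S w, F p) < (⨅ p ∈ S w, F p) + ε n :=
      ENNReal.lt_add_right hIne (hεne n)
    have : ∃ p ∈ S w, F p < (⨅ p ∈ S w, F p) + ε n := by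
      simpa [iInf_lt_iff] using hlt
    obtain ⟨p, hp, hplt⟩ := this
    exact ⟨⟨p, hmemtop hw hp⟩, hp, hplt.le⟩
  choose T hT1 hT2 using sel
  obtain ⟨u, hu0, hus⟩ : ∃ u : ℕ → {w : X // F w ≠ ⊤}, u 0 = ⟨x, hx⟩ ∧
      ∀ n, u (n + 1) = T (u n) n :=
    ⟨fun n => Nat.rec ⟨x, hx⟩ (fun n w => T w n) n, rfl, fun n => rfl⟩
  have h1 : ∀ n, ((u (n + 1) : X)) ∈ S (u n : X) := fun n => by rw [hus]; exact hT1 (u n) n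
  have h2 : ∀ n, F (u (n + 1) : X) ≤ (⨅ p ∈ S (u n : X), F p) + ε n := fun n => by
    rw [hus]; exact hT2 (u n) n
  -- chain
  have chain : ∀ n k, (u (n + k) : X) ∈ S (u n : X) := by
    intro n k
    induction k with
    | zero => exact hself _
    | succ k ih =>
      have hm := h1 (n + k)
      show F (u (n+k+1) : X) + ENNReal.ofReal (σ * dist (u (n+k+1) : X) (u n : X)) ≤ F (u n : X)
      calc F (u (n+k+1) : X) + ENNReal.ofReal (σ * dist (u (n+k+1) : X) (u n : X))
          ≤ F (u (n+k+1) : X) + (ENNReal.ofReal (σ * dist (u (n+k+1) : X) (u (n+k) : X))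
              + ENNReal.ofReal (σ * dist (u (n+k) : X) (u n : X))) := by
            gcongr
            exact ofReal_dist_split σ _ _ _ hσ.le dist_nonneg dist_nonneg (dist_triangle _ _ _)
        _ = (F (u (n+k+1) : X) + ENNReal.ofReal (σ * dist (u (n+k+1) : X) (u (n+k) : X)))
              + ENNReal.ofReal (σ * dist (u (n+k) : X) (u n : X)) := by ring
        _ ≤ F (u (n+k) : X) + ENNReal.ofReal (σ * dist (u (n+k) : X) (u n : X)) := by
            gcongr
            exact hm
        _ ≤ F (u n : X) := ih
  have chain' : ∀ n m, n ≤ m → (u m : X) ∈ S (u n : X) := by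
    intro n m hnm
    obtain ⟨k, rfl⟩ := Nat.exists_eq_add_of_le hnm
    exact chain n k
  set a : ℕ → ℝ := fun n => (F (u n : X)).toReal with ha
  have haF : ∀ n, F (u n : X) = ENNReal.ofReal (a n) := fun n => (ENNReal.ofReal_toReal (u n).2).symm
  have hanneg : ∀ n, 0 ≤ a n := fun n => ENNReal.toReal_nonneg
  have hstep : ∀ n m, n ≤ m → a m + σ * dist (u m : X) (u n : X) ≤ a n := by
    intro n m hnm
    have hc := chain' n m hnm
    have := ENNReal.toReal_le_toReal (a := F (u m : X) + ENNReal.ofReal (σ * dist (u m : X) (u n : X)))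
      (b := F (u n : X)) (by
        exact ENNReal.add_ne_top.2 ⟨(u m).2, ENNReal.ofReal_ne_top⟩) (u n).2 |>.mpr hc
    rwa [ENNReal.toReal_add (u m).2 ENNReal.ofReal_ne_top,
      ENNReal.toReal_ofReal (by positivity)] at this
  have hanti : Antitone a := antitone_nat_of_succ_le fun n => by
    have := hstep n (n + 1) (Nat.le_succ n)
    nlinarith [dist_nonneg (x := (u (n+1) : X)) (y := (u n : X))]
  have hbdd : BddBelow (Set.range a) := ⟨0, by rintro _ ⟨n, rfl⟩; exact hanneg n⟩
  set l : ℝ := ⨅ n, a n with hl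
  have hal : Tendsto a atTop (nhds l) := tendsto_atTop_ciInf hanti hbdd
  have hla : ∀ n, l ≤ a n := fun n => ciInf_le hbdd n
  have hl0 : 0 ≤ l := le_ciInf hanneg
  have hd : ∀ n m, n ≤ m → dist (u n : X) (u m : X) ≤ (a n - a m) / σ := by
    intro n m h
    rw [dist_comm, le_div_iff₀ hσ]
    have := hstep n m h
    nlinarith
  have hcauchy : CauchySeq fun n => (u n : X) := by
    apply cauchySeq_of_le_tendsto_0 (fun N => (a N - l) / σ)
    · intro n m N hn hm
      rcases le_total n m with h | h
      · refine le_trans (hd n m h) ?_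
        gcongr
        · exact hanti hn
        · exact hla m
      · rw [dist_comm]
        refine le_trans (hd m n h) ?_
        gcongr
        · exact hanti hm
        · exact hla n
    · have := (hal.sub_const l).div_const σ
      simpa using this
  obtain ⟨y, hy⟩ := cauchySeq_tendsto_of_complete hcauchy
  -- F y ≤ ofReal l
  have hFyl : F y ≤ ENNReal.ofReal l := by
    by_contra hcon
    push_neg at hcon
    obtain ⟨c, hc1, hc2⟩ := exists_between hcon
    have hev : ∀ᶠ m in atTop, c < F (u m : X) := hy.eventually (hF y c hc2)
    have htend : Tendsto (fun m => F (u m : X)) atTop (nhds (ENNReal.ofReal l)) := by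
      simp only [haF]
      exact ENNReal.tendsto_ofReal hal
    have : c ≤ ENNReal.ofReal l := ge_of_tendsto htend (hev.mono fun m hm => hm.le)
    exact absurd hc1 (not_lt_of_ge this)
  -- y ∈ S (u n) for all n
  have hdyn : ∀ n, dist y (u n : X) ≤ (a n - l) / σ := by
    intro n
    have htend : Tendsto (fun m => dist (u m : X) (u n : X)) atTop (nhds (dist y (u n : X))) :=
      hy.dist tendsto_const_nhds
    refine le_of_tendsto htend (eventually_atTop.2 ⟨n, fun m hm => ?_⟩)
    rw [dist_comm]
    refine le_trans (hd n m hm) ?_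
    gcongr
    exact hla m
  have hyS : ∀ n, F y + ENNReal.ofReal (σ * dist y (u n : X)) ≤ F (u n : X) := by
    intro n
    calc F y + ENNReal.ofReal (σ * dist y (u n : X))
        ≤ ENNReal.ofReal l + ENNReal.ofReal (a n - l) := by
          refine add_le_add hFyl (ENNReal.ofReal_le_ofReal ?_)
          have := hdyn n
          rw [le_div_iff₀ hσ] at this
          nlinarith
      _ = ENNReal.ofReal (l + (a n - l)) := (ENNReal.ofReal_add hl0 (by linarith [hla n])).symm
      _ = F (u n : X) := by rw [haF n]; ring_nf
  refine ⟨y, ?_, ?_⟩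
  · have h := hyS 0
    rw [hu0] at h
    exact h
  · intro z
    by_contra hcon
    push_neg at hcon
    have hzS : ∀ n, z ∈ S (u n : X) := by
      intro n
      show F z + ENNReal.ofReal (σ * dist z (u n : X)) ≤ F (u n : X)
      calc F z + ENNReal.ofReal (σ * dist z (u n : X))
          ≤ F z + (ENNReal.ofReal (σ * dist z y) + ENNReal.ofReal (σ * dist y (u n : X))) := by
            gcongr
            exact ofReal_dist_split σ _ _ _ hσ.le dist_nonneg dist_nonneg (dist_triangle _ _ _)
        _ = (F z + ENNReal.ofReal (σ * dist z y)) + ENNReal.ofReal (σ * dist y (u n : X)) := by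
            ring
        _ ≤ F y + ENNReal.ofReal (σ * dist y (u n : X)) := add_le_add_left hcon.le _
        _ ≤ F (u n : X) := hyS n
    have hFz : ∀ n, F (u (n+1) : X) ≤ F z + ε n := fun n =>
      le_trans (h2 n) (add_le_add_left (iInf₂_le z (hzS n)) _)
    have hlz : ENNReal.ofReal l ≤ F z := by
      have htend1 : Tendsto (fun n => F (u (n+1) : X)) atTop (nhds (ENNReal.ofReal l)) := by
        refine Tendsto.congr (fun n => (haF (n+1)).symm) ?_
        exact (ENNReal.tendsto_ofReal hal).comp (tendsto_add_atTop_nat 1)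
      have htend2 : Tendsto (fun n => F z + ε n) atTop (nhds (F z)) := by
        have h := Tendsto.const_add (F z) hε0
        rw [add_zero] at h
        exact h
      exact le_of_tendsto_of_tendsto' htend1 htend2 hFz
    have : F y ≤ F z := le_trans hFyl hlz
    exact absurd hcon (not_lt_of_ge (le_trans this le_self_add))


lemma convex_comb_lt {A B c t s : ℝ} (hA : A < c) (hB : B < c) (ht : 0 ≤ t) (hs : 0 ≤ s)
    (hts : t + s = 1) : t * A + s * B < c := by
  rcases eq_or_lt_of_le ht with h | h
  · have hs1 : s = 1 := by linarith
    rw [← h, hs1]; linarith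
  · have hc' : t * c + s * c = c := by rw [← add_mul, hts, one_mul]
    linarith [mul_le_mul_of_nonneg_left hB.le hs, mul_lt_mul_of_pos_left hA h]

lemma sandwich {X : Type*} [NormedAddCommGroup X] [NormedSpace ℝ X]
    (F : X → ℝ≥0∞)
    (hFc : ∀ (u v : X) (t a b : ℝ), 0 ≤ t → t ≤ 1 → 0 ≤ a → 0 ≤ b →
      F u ≤ ENNReal.ofReal a → F v ≤ ENNReal.ofReal b →
      F (t • u + (1 - t) • v) ≤ ENNReal.ofReal (t * a + (1 - t) * b))
    {σ : ℝ} (hσ : 0 ≤ σ) (y : X) (c : ℝ) (hc : 0 < c) (hFy : F y = ENNReal.ofReal c)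
    (hmin : ∀ z, F y ≤ F z + ENNReal.ofReal (σ * dist z y)) :
    ∃ g : X →L[ℝ] ℝ, ‖g‖ ≤ σ ∧ ∀ z, ENNReal.ofReal (g (z - y) + c) ≤ F z := by
  classical
  set B : Set (X × ℝ) := {p | p.2 + σ * ‖p.1 - y‖ < c} with hBdef
  set C : Set (X × ℝ) := {p | 0 ≤ p.2 ∧ F p.1 ≤ ENNReal.ofReal p.2} with hCdef
  have hBopen : IsOpen B := by
    apply isOpen_lt ?_ continuous_const
    exact continuous_snd.add (continuous_const.mul ((continuous_fst.sub continuous_const).norm))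
  have hnorm_conv : ∀ (p q : X) (t s : ℝ), 0 ≤ t → 0 ≤ s → t + s = 1 →
      ‖t • p + s • q - y‖ ≤ t * ‖p - y‖ + s * ‖q - y‖ := by
    intro p q t s ht hs hts
    have heq : t • p + s • q - y = t • (p - y) + s • (q - y) := by
      match_scalars <;> linarith
    rw [heq]
    refine le_trans (norm_add_le _ _) ?_
    rw [norm_smul, norm_smul, Real.norm_eq_abs, Real.norm_eq_abs, abs_of_nonneg ht,
      abs_of_nonneg hs]
  have hBconv : Convex ℝ B := by
    rintro ⟨p1, p2⟩ hp ⟨q1, q2⟩ hq t s ht hs hts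
    simp only [hBdef, Set.mem_setOf_eq, Prod.smul_mk, Prod.mk_add_mk, smul_eq_mul] at hp hq ⊢
    have h1 := hnorm_conv p1 q1 t s ht hs hts
    have h2 : t * p2 + s * q2 + σ * ‖t • p1 + s • q1 - y‖
        ≤ t * (p2 + σ * ‖p1 - y‖) + s * (q2 + σ * ‖q1 - y‖) := by
      nlinarith [mul_le_mul_of_nonneg_left h1 hσ]
    exact lt_of_le_of_lt h2 (convex_comb_lt hp hq ht hs hts)
  have hCconv : Convex ℝ C := by
    rintro ⟨p1, p2⟩ hp ⟨q1, q2⟩ hq t s ht hs hts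
    simp only [hCdef, Set.mem_setOf_eq, Prod.smul_mk, Prod.mk_add_mk, smul_eq_mul] at hp hq ⊢
    constructor
    · nlinarith [hp.1, hq.1]
    · have hs' : s = 1 - t := by linarith
      subst hs'
      exact hFc p1 q1 t p2 q2 ht (by linarith) hp.1 hq.1 hp.2 hq.2
  have hdisj : Disjoint B C := by
    rw [Set.disjoint_left]
    rintro ⟨p1, p2⟩ hp hpc
    simp only [hBdef, Set.mem_setOf_eq] at hp
    obtain ⟨hp2, hpF⟩ := hpc
    have h1 : F y ≤ ENNReal.ofReal (p2 + σ * ‖p1 - y‖) := by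
      calc F y ≤ F p1 + ENNReal.ofReal (σ * dist p1 y) := hmin p1
        _ ≤ ENNReal.ofReal p2 + ENNReal.ofReal (σ * ‖p1 - y‖) := by
            rw [dist_eq_norm]; exact add_le_add_left hpF _
        _ = ENNReal.ofReal (p2 + σ * ‖p1 - y‖) :=
            (ENNReal.ofReal_add hp2 (by positivity)).symm
    rw [hFy] at h1
    have h2 : c ≤ p2 + σ * ‖p1 - y‖ := by
      have := ENNReal.ofReal_le_ofReal_iff (by positivity) |>.1 h1
      exact this
    linarith
  obtain ⟨φ, u, hφB, hφC⟩ := geometric_hahn_banach_open hBconv hBopen hCconv hdisj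
  set α : ℝ := φ ((0 : X), (1 : ℝ)) with hα
  set L : X →L[ℝ] ℝ := φ.comp (ContinuousLinearMap.inl ℝ X ℝ) with hL
  have hφeq : ∀ (z : X) (t : ℝ), φ (z, t) = L z + t * α := by
    intro z t
    have : ((z, t) : X × ℝ) = (z, (0 : ℝ)) + t • ((0 : X), (1 : ℝ)) := by
      simp [Prod.ext_iff]
    rw [this, map_add, map_smul, smul_eq_mul]
    simp [hL]
    exact Or.inl rfl
  have hB' : ∀ (z : X) (t : ℝ), t + σ * ‖z - y‖ < c → L z + t * α < u := by
    intro z t h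
    have := hφB (z, t) h
    rwa [hφeq] at this
  have hC' : ∀ (z : X) (t : ℝ), 0 ≤ t → F z ≤ ENNReal.ofReal t → u ≤ L z + t * α := by
    intro z t h1 h2
    have := hφC (z, t) ⟨h1, h2⟩
    rwa [hφeq] at this
  -- α > 0
  have hyB : ∀ n : ℕ, L y + (c - 1 - n) * α < u := by
    intro n
    apply hB'
    simp only [sub_self, norm_zero, mul_zero, add_zero]
    have : (0:ℝ) ≤ n := Nat.cast_nonneg n
    linarith
  have hαpos : 0 < α := by
    rcases lt_trichotomy α 0 with hneg | hzero | hpos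
    · exfalso
      obtain ⟨n, hn⟩ := exists_nat_ge ((c - 1) - (u - L y) / α)
      have h1 := hyB n
      have h2 : (c - 1 - n : ℝ) ≤ (u - L y) / α := by linarith
      rw [le_div_iff_of_neg hneg] at h2
      nlinarith
    · exfalso
      have hLz : ∀ z : X, L z < u := by
        intro z
        have := hB' z (c - 1 - σ * ‖z - y‖) (by linarith)
        rwa [hzero, mul_zero, add_zero] at this
      have hL0 : ∀ z : X, L z = 0 := by
        intro z
        by_contra hz
        rcases lt_or_gt_of_ne hz with h | h
        · obtain ⟨n, hn⟩ := exists_nat_ge (u / (-(L z)))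
          have := hLz ((n : ℝ) • (-z))
          rw [map_smul, map_neg, smul_eq_mul] at this
          have hu0 : 0 < u := lt_of_le_of_lt (le_of_eq (map_zero L).symm) (hLz 0)
          rw [div_le_iff₀ (by linarith : 0 < -(L z))] at hn
          nlinarith
        · obtain ⟨n, hn⟩ := exists_nat_ge (u / L z)
          have := hLz ((n : ℝ) • z)
          rw [map_smul, smul_eq_mul] at this
          rw [div_le_iff₀ h] at hn
          nlinarith
      have h1 := hLz y
      rw [hL0 y] at h1
      have h2 := hC' y c hc.le (le_of_eq hFy)
      rw [hL0 y, hzero, mul_zero] at h2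
      linarith
    · exact hpos
  -- key inequalities
  have hBlim : ∀ z : X, L z + (c - σ * ‖z - y‖) * α ≤ u := by
    intro z
    by_contra hcon
    push_neg at hcon
    set v := L z + (c - σ * ‖z - y‖) * α with hv
    have hε : 0 < (v - u) / α := div_pos (by linarith) hαpos
    have := hB' z (c - σ * ‖z - y‖ - (v - u) / α) (by linarith)
    rw [sub_mul, div_mul_cancel₀ _ (ne_of_gt hαpos)] at this
    have : v - (v - u) < u := by linarith
    linarith
  have hCy : L y + c * α ≤ u := by
    have h := hBlim y
    rw [sub_self, norm_zero, mul_zero, sub_zero] at h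
    exact h
  obtain ⟨g, hgeval⟩ : ∃ g : X →L[ℝ] ℝ, ∀ v : X, g v = -(L v) / α :=
    ⟨(-(α⁻¹)) • L, fun v => by
      rw [ContinuousLinearMap.smul_apply, smul_eq_mul, neg_div, div_eq_inv_mul]
      ring⟩
  have claim1 : ∀ v : X, g v ≤ σ * ‖v‖ := by
    intro v
    have h1 := hBlim (y - v)
    have h2 := hC' y c hc.le (le_of_eq hFy)
    have h3 : ‖y - v - y‖ = ‖v‖ := by
      rw [show y - v - y = -v by abel, norm_neg]
    rw [h3, map_sub] at h1
    rw [hgeval, div_le_iff₀ hαpos]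
    nlinarith
  have hgnorm : ‖g‖ ≤ σ := by
    apply ContinuousLinearMap.opNorm_le_bound g hσ
    intro v
    rw [Real.norm_eq_abs, abs_le]
    constructor
    · have := claim1 (-v)
      rw [map_neg, norm_neg] at this
      linarith
    · exact claim1 v
  refine ⟨g, hgnorm, ?_⟩
  intro z
  rcases eq_or_ne (F z) ⊤ with htop | htop
  · rw [htop]; exact le_top
  set t : ℝ := (F z).toReal with ht
  have hFz : F z = ENNReal.ofReal t := (ENNReal.ofReal_toReal htop).symm
  have ht0 : 0 ≤ t := ENNReal.toReal_nonneg
  have h1 := hC' z t ht0 (le_of_eq hFz)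
  have h2 : L y + c * α ≤ L z + t * α := le_trans hCy h1
  have h3 : g (z - y) + c ≤ t := by
    rw [hgeval, map_sub]
    rw [div_add' _ _ _ (ne_of_gt hαpos), div_le_iff₀ hαpos]
    nlinarith
  rw [hFz]
  exact ENNReal.ofReal_le_ofReal h3



/-- for `f` convex lsc and `x̄ ∈ [f ≤ 0]`, a local linear error
bound holds at `x̄` iff `liminf_{x→x̄, f(x)>0} d(0,∂f(x)) > 0` (the latter
expressed as: some `τ > 0` bounds `d(0,∂f(x))` from below near `x̄`). -/
theorem stmt_8 {X : Type*} [NormedAddCommGroup X] [NormedSpace ℝ X] [CompleteSpace X]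
    (f : X → EReal) (hbot : ∀ u, f u ≠ ⊥) (hconv : EConvexOn f)
    (hlsc : LowerSemicontinuous f)
    (xbar : X) (hxbar : f xbar ≤ 0) :
    (∃ τ δ : ℝ, 0 < τ ∧ 0 < δ ∧ ∀ x : X, dist x xbar < δ →
        ENNReal.ofReal τ * EMetric.infEdist x {u | f u ≤ 0} ≤ (f x).toENN) ↔
    0 < Filter.liminf (fun x => dSub f x) (nhdsWithin xbar {x | 0 < f x}) := by
  constructor
  · rintro ⟨τ, δ, hτ, hδ, hEB⟩
    have h1 : ∀ᶠ x in nhdsWithin xbar {x | 0 < f x}, ENNReal.ofReal τ ≤ dSub f x := by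
      rw [eventually_nhdsWithin_iff]
      filter_upwards [Metric.ball_mem_nhds xbar hδ] with x hx hfx
      have hx' : dist x xbar < δ := by rwa [Metric.mem_ball] at hx
      refine le_iInf₂ fun g hg => ?_
      exact ENNReal.ofReal_le_ofReal
        (fwd_bound f hbot hlsc xbar hxbar hτ hfx (hEB x hx') g hg)
    have h2 : ENNReal.ofReal τ ≤
        Filter.liminf (fun x => dSub f x) (nhdsWithin xbar {x | 0 < f x}) :=
      Filter.le_liminf_of_le (by isBoundedDefault) h1
    exact lt_of_lt_of_le (ENNReal.ofReal_pos.2 hτ) h2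
  · intro hpos
    obtain ⟨c₀, hc₀pos, hc₀lt⟩ := exists_between hpos
    have hev : ∀ᶠ x in nhdsWithin xbar {x | 0 < f x}, c₀ < dSub f x :=
      Filter.eventually_lt_of_lt_liminf hc₀lt
    rw [eventually_nhdsWithin_iff, Metric.eventually_nhds_iff] at hev
    obtain ⟨δ, hδ, hball⟩ := hev
    have hc₀top : c₀ ≠ ⊤ := ne_top_of_lt hc₀lt
    set τ : ℝ := c₀.toReal with hτdef
    have hτpos : 0 < τ := ENNReal.toReal_pos (ne_of_gt hc₀pos) hc₀top
    have hc₀eq : ENNReal.ofReal τ = c₀ := ENNReal.ofReal_toReal hc₀top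
    set σ : ℝ := τ / 2 with hσdef
    have hσpos : 0 < σ := by positivity
    refine ⟨σ, δ / 2, hσpos, by positivity, ?_⟩
    intro x hx
    by_contra hcon
    push_neg at hcon
    set S : Set X := {u | f u ≤ 0} with hS
    have hSmem : xbar ∈ S := hxbar
    have hFlsc : LowerSemicontinuous fun z => (f z).toENN := lsc_toENN hbot hlsc
    set d : ℝ≥0∞ := EMetric.infEdist x S with hd
    have hdle : d ≤ ENNReal.ofReal (dist x xbar) := by
      rw [← edist_dist]
      exact infEdist_le_edist_of_mem hSmem
    have hdtop : d ≠ ⊤ := (lt_of_le_of_lt hdle ENNReal.ofReal_lt_top).ne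
    have hfx_top : f x ≠ ⊤ := by
      intro h
      rw [h, EReal.toENN_top] at hcon
      exact not_top_lt hcon
    have hfx_pos : 0 < f x := by
      by_contra h
      push_neg at h
      have hxS : x ∈ S := h
      have hd0 : d = 0 := by rw [hd]; exact infEdist_zero_of_mem hxS
      rw [hd0, mul_zero] at hcon
      exact not_lt_of_ge zero_le hcon
    set r : ℝ := (f x).toReal with hrdef
    have hfxr : f x = (r : EReal) := (EReal.coe_toReal hfx_top (hbot x)).symm
    have hr0 : 0 < r := by
      rw [hfxr] at hfx_pos; exact_mod_cast hfx_pos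
    have hFx : (f x).toENN = ENNReal.ofReal r := EReal.toENN_ne_top hfx_top
    set D : ℝ := d.toReal with hDdef
    have hdD : d = ENNReal.ofReal D := (ENNReal.ofReal_toReal hdtop).symm
    have hrD : r < σ * D := by
      rw [hFx, hdD, ← ENNReal.ofReal_mul hσpos.le] at hcon
      have hσD : 0 < σ * D :=
        ENNReal.ofReal_pos.1 (lt_of_le_of_lt zero_le hcon)
      exact (ENNReal.ofReal_lt_ofReal_iff hσD).1 hcon
    have hD0 : 0 < D := by nlinarith
    have hDle : D ≤ dist x xbar := ENNReal.toReal_le_of_le_ofReal dist_nonneg hdle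
    -- Ekeland
    obtain ⟨y, hy1, hy2⟩ := ekeland (fun z => (f z).toENN) hFlsc hσpos x
      (show (f x).toENN ≠ ⊤ by rw [hFx]; exact ENNReal.ofReal_ne_top)
    beta_reduce at hy1
    rw [hFx] at hy1
    have hFy_le : (f y).toENN ≤ ENNReal.ofReal r := le_trans le_self_add hy1
    have hdyx : σ * dist y x ≤ r :=
      (ENNReal.ofReal_le_ofReal_iff hr0.le).1 (le_trans le_add_self hy1)
    have hdyx' : dist y x < D := by nlinarith
    have hynotS : y ∉ S := by
      intro hy
      have h1 : d ≤ ENNReal.ofReal (dist x y) := by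
        rw [← edist_dist]
        exact infEdist_le_edist_of_mem hy
      have h2 : D ≤ dist x y := ENNReal.toReal_le_of_le_ofReal dist_nonneg h1
      rw [dist_comm] at h2
      linarith
    have hfy_pos : 0 < f y := lt_of_not_ge hynotS
    have hdyxbar : dist y xbar < δ := by
      have htri := dist_triangle y x xbar
      have : σ * dist y x < σ * (δ / 2) := by nlinarith
      have hyx2 : dist y x < δ / 2 := by nlinarith
      linarith
    have hFy_top : (f y).toENN ≠ ⊤ := ne_top_of_le_ne_top ENNReal.ofReal_ne_top hFy_le
    have hfy_top : f y ≠ ⊤ := by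
      intro h
      rw [h, EReal.toENN_top] at hFy_top
      exact hFy_top rfl
    set c : ℝ := (f y).toReal with hcdef
    have hfyc : f y = (c : EReal) := (EReal.coe_toReal hfy_top (hbot y)).symm
    have hc0 : 0 < c := by
      rw [hfyc] at hfy_pos; exact_mod_cast hfy_pos
    have hFy : (f y).toENN = ENNReal.ofReal c := EReal.toENN_ne_top hfy_top
    obtain ⟨g, hgn, hgs⟩ := sandwich (fun z => (f z).toENN)
      (conv_transfer hbot hconv) hσpos.le y c hc0 hFy hy2
    have hgsub : g ∈ ESubdiff f y := subdiff_conv hbot hconv y c hc0 hfyc g hgs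
    have hdsub : dSub f y ≤ ENNReal.ofReal ‖g‖ := iInf₂_le g hgsub
    have hlt : dSub f y < c₀ := by
      refine lt_of_le_of_lt (le_trans hdsub (ENNReal.ofReal_le_ofReal hgn)) ?_
      rw [← hc₀eq]
      exact (ENNReal.ofReal_lt_ofReal_iff hτpos).2 (by rw [hσdef]; linarith)
    exact absurd (hball hdyxbar hfy_pos) (not_lt_of_ge hlt.le)
end

section
/- With f : ℝ → ℝ as in the lsc step-quadratic example (f = 0 on (−∞,0], f(x) = x² + 1/n − 1/n² on (1/n, 1/(n−1)] for n ≥ 3, f(x) = x² + 1/4 for x > 1/2) and q = 1/2: the quantity d(x, [f ≤ 0])^{q−1} · d(0, ∂f(x))^q equals √2 for all x > 0 with x not a breakpoint 1/(n−1), while along the sequence x_n = 1/(n−1) the quantity f(x_n)^{q−1} · d(0, ∂f(x_n)) tends to 0 as n → ∞. Hence liminf_{x→0, f(x)↓0} d(x,[f≤0])^{q−1} d(0,∂f(x))^q > 0 but liminf_{x→0, f(x)↓0} f(x)^{q−1} d(0,∂f(x)) = 0. -/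
open ENNReal Filter

/-- The Fréchet subdifferential of a real function on `ℝ`. -/
def FSubdiffR (f : ℝ → ℝ) (x : ℝ) : Set ℝ :=
  {g | ∀ ε : ℝ, 0 < ε → ∃ δ > 0, ∀ y : ℝ, |y - x| < δ →
      f x + g * (y - x) - ε * |y - x| ≤ f y}

/-- `d(0, ∂f(x))`, with value `+∞` when `∂f(x) = ∅`. -/
noncomputable def dSubR (f : ℝ → ℝ) (x : ℝ) : ℝ≥0∞ :=
  ⨅ g ∈ FSubdiffR f x, ENNReal.ofReal |g|

lemma aux_mono {a b : ℝ} (hb : 0 < b) (hba : b ≤ a) (ha : a ≤ 1/3) :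
    b - b^2 ≤ a - a^2 := by nlinarith

lemma aux_quarter (b : ℝ) : b - b^2 ≤ 1/4 := by nlinarith [sq_nonneg (b - 1/2)]

lemma piece {x : ℝ} (hx0 : 0 < x) (hx2 : x ≤ 1/2) :
    ∃ n : ℕ, 3 ≤ n ∧ 1/(n:ℝ) < x ∧ x ≤ 1/((n:ℝ)-1) := by
  have h2 : (2:ℝ) ≤ 1/x := by
    rw [le_div_iff₀ hx0]; linarith
  have hfl : 2 ≤ ⌊1/x⌋₊ := Nat.le_floor (by exact_mod_cast h2)
  refine ⟨⌊1/x⌋₊ + 1, by omega, ?_, ?_⟩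
  · have h1 : 1/x < ((⌊1/x⌋₊ + 1 : ℕ) : ℝ) := by
      push_cast; exact Nat.lt_floor_add_one _
    have hnpos : (0:ℝ) < ((⌊1/x⌋₊ + 1 : ℕ) : ℝ) := by positivity
    rw [div_lt_iff₀ hnpos] at *
    rw [div_lt_iff₀ hx0] at h1
    nlinarith
  · have h1 : ((⌊1/x⌋₊ : ℕ) : ℝ) ≤ 1/x := Nat.floor_le (by positivity)
    have hnpos : (0:ℝ) < ((⌊1/x⌋₊ : ℕ) : ℝ) := by
      have : (2:ℝ) ≤ (⌊1/x⌋₊ : ℝ) := by exact_mod_cast hfl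
      linarith
    have : ((⌊1/x⌋₊ + 1 : ℕ) : ℝ) - 1 = (⌊1/x⌋₊ : ℝ) := by push_cast; ring
    rw [this, le_div_iff₀ hnpos]
    rw [le_div_iff₀ hx0] at h1
    nlinarith

section main
variable {f : ℝ → ℝ}

lemma flb (hn : ∀ n : ℕ, 3 ≤ n → ∀ x : ℝ, 1 / (n : ℝ) < x → x ≤ 1 / ((n : ℝ) - 1) →
      f x = x ^ 2 + 1 / (n : ℝ) - 1 / (n : ℝ) ^ 2)
    (htop : ∀ x : ℝ, 1 / 2 < x → f x = x ^ 2 + 1 / 4)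
    {n : ℕ} (hn3 : 3 ≤ n) {y : ℝ} (hy : 1/(n:ℝ) < y) :
    y^2 + (1/(n:ℝ) - 1/(n:ℝ)^2) ≤ f y := by
  have hnR : (3:ℝ) ≤ (n:ℝ) := by exact_mod_cast hn3
  have hb : (0:ℝ) < 1/(n:ℝ) := by positivity
  have hb3 : 1/(n:ℝ) ≤ 1/3 := by
    rw [div_le_div_iff₀ (by linarith) (by norm_num)]; linarith
  rcases le_or_gt y (1/2) with hy2 | hy2
  · obtain ⟨m, hm3, hm1, hm2⟩ := piece (lt_trans hb hy) hy2
    have hmR : (3:ℝ) ≤ (m:ℝ) := by exact_mod_cast hm3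
    have hmn : 1/(n:ℝ) ≤ 1/(m:ℝ) := by
      -- from y ≤ 1/(m-1) and 1/n < y : m-1 < n so m ≤ n
      have h1 : (m:ℝ) - 1 ≤ 1/y := by
        rw [le_div_iff₀ (lt_trans hb hy)]
        rw [le_div_iff₀ (by linarith : (0:ℝ) < (m:ℝ)-1)] at hm2
        linarith
      have h2 : 1/y < (n:ℝ) := by
        rw [div_lt_iff₀ (lt_trans hb hy)]
        rw [div_lt_iff₀ (by linarith : (0:ℝ) < (n:ℝ))] at hy
        linarith
      have hmn' : (m:ℝ) ≤ (n:ℝ) := by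
        have : (m:ℝ) - 1 < (n:ℝ) := lt_of_le_of_lt h1 h2
        have : m < n + 1 := by exact_mod_cast (by linarith : (m:ℝ) < (n:ℝ)+1)
        exact_mod_cast Nat.lt_add_one_iff.mp this
      exact div_le_div_of_nonneg_left (by norm_num) (by linarith) hmn'
    have hfy := hn m hm3 y hm1 hm2
    have key : 1/(n:ℝ) - (1/(n:ℝ))^2 ≤ 1/(m:ℝ) - (1/(m:ℝ))^2 :=
      aux_mono hb hmn (by rw [div_le_div_iff₀ (by linarith : (0:ℝ) < (m:ℝ)) (by norm_num)]; linarith)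
    have e1 : (1/(n:ℝ))^2 = 1/(n:ℝ)^2 := by rw [div_pow]; norm_num
    have e2 : (1/(m:ℝ))^2 = 1/(m:ℝ)^2 := by rw [div_pow]; norm_num
    rw [hfy]; rw [e1, e2] at key; linarith
  · have hfy := htop y hy2
    have := aux_quarter (1/(n:ℝ))
    have e1 : (1/(n:ℝ))^2 = 1/(n:ℝ)^2 := by rw [div_pow]; norm_num
    rw [hfy]; rw [e1] at this; linarith

lemma local_piece (hn : ∀ n : ℕ, 3 ≤ n → ∀ x : ℝ, 1 / (n : ℝ) < x → x ≤ 1 / ((n : ℝ) - 1) →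
      f x = x ^ 2 + 1 / (n : ℝ) - 1 / (n : ℝ) ^ 2)
    (htop : ∀ x : ℝ, 1 / 2 < x → f x = x ^ 2 + 1 / 4)
    {x : ℝ} (hx : 0 < x) :
    ∃ δ > 0, ∃ c : ℝ, f x = x^2 + c ∧ (∀ y, x - δ < y → y ≤ x → f y = y^2 + c) ∧
      (∀ y, x < y → y^2 + c ≤ f y) := by
  rcases le_or_gt x (1/2) with hx2 | hx2
  · obtain ⟨n, hn3, h1, h2⟩ := piece hx hx2
    refine ⟨x - 1/(n:ℝ), by linarith, 1/(n:ℝ) - 1/(n:ℝ)^2, ?_, ?_, ?_⟩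
    · have := hn n hn3 x h1 h2; linarith [this]
    · intro y hy1 hy2
      have := hn n hn3 y (by linarith) (le_trans hy2 h2)
      linarith
    · intro y hy
      exact flb hn htop hn3 (lt_trans h1 hy)
  · refine ⟨x - 1/2, by linarith, 1/4, htop x hx2, ?_, ?_⟩
    · intro y hy1 hy2; exact htop y (by linarith)
    · intro y hy; rw [htop y (by linarith)]

lemma dSub_eq (hn : ∀ n : ℕ, 3 ≤ n → ∀ x : ℝ, 1 / (n : ℝ) < x → x ≤ 1 / ((n : ℝ) - 1) →
      f x = x ^ 2 + 1 / (n : ℝ) - 1 / (n : ℝ) ^ 2)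
    (htop : ∀ x : ℝ, 1 / 2 < x → f x = x ^ 2 + 1 / 4)
    {x : ℝ} (hx : 0 < x) :
    dSubR f x = ENNReal.ofReal (2*x) := by
  obtain ⟨δ, hδ, c, hfx, hleft, hright⟩ := local_piece hn htop hx
  have hmem : (2*x) ∈ FSubdiffR f x := by
    intro ε hε
    refine ⟨δ, hδ, fun y hy => ?_⟩
    have habs : -δ < y - x ∧ y - x < δ := abs_lt.mp hy
    rcases le_or_gt y x with h | h
    · have hfy := hleft y (by linarith [habs.1]) h
      have : 0 ≤ ε * |y - x| := mul_nonneg hε.le (abs_nonneg _)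
      rw [hfy, hfx]; nlinarith [sq_nonneg (y - x)]
    · have hfy := hright y h
      have : 0 ≤ ε * |y - x| := mul_nonneg hε.le (abs_nonneg _)
      rw [hfx] at *; nlinarith [sq_nonneg (y - x)]
  have hlb : ∀ g ∈ FSubdiffR f x, 2*x ≤ g := by
    intro g hg
    by_contra hcon
    push_neg at hcon
    set ε := (2*x - g)/4 with hεdef
    have hε : 0 < ε := by simp [hεdef]; linarith
    obtain ⟨δ', hδ', hδ'p⟩ := hg ε hε
    set t := min (min δ δ' / 2) ε with htdef
    have ht : 0 < t := by positivity
    have hmin : 0 < min δ δ' := lt_min hδ hδ'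
    have htδ : t < δ :=
      lt_of_le_of_lt (min_le_left _ _) (lt_of_lt_of_le (half_lt_self hmin) (min_le_left δ δ'))
    have htδ' : t < δ' :=
      lt_of_le_of_lt (min_le_left _ _) (lt_of_lt_of_le (half_lt_self hmin) (min_le_right δ δ'))
    have htε : t ≤ ε := min_le_right _ _
    have habs : |x - t - x| = t := by rw [show x - t - x = -t by ring, abs_neg, abs_of_pos ht]
    have h1 := hδ'p (x - t) (by rw [habs]; exact htδ')
    have h2 := hleft (x - t) (by linarith) (by linarith)
    rw [habs, h2, hfx] at h1
    nlinarith
  apply le_antisymm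
  · have h : dSubR f x ≤ ENNReal.ofReal |2*x| := by
      unfold dSubR
      exact iInf₂_le (2*x) hmem
    rwa [abs_of_pos (by linarith : (0:ℝ) < 2*x)] at h
  · unfold dSubR
    apply le_iInf₂
    intro g hg
    exact ENNReal.ofReal_le_ofReal (le_trans (hlb g hg) (le_abs_self g))

lemma val_eq {x : ℝ} (hx : 0 < x) :
    (ENNReal.ofReal x) ^ ((1 : ℝ) / 2 - 1) * (ENNReal.ofReal (2*x)) ^ ((1 : ℝ) / 2)
      = ENNReal.ofReal (Real.sqrt 2) := by
  have hx0 : ENNReal.ofReal x ≠ 0 := by simp [ENNReal.ofReal_eq_zero]; linarith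
  have hxt : ENNReal.ofReal x ≠ ⊤ := ENNReal.ofReal_ne_top
  rw [show (2:ℝ)*x = 2*x by ring, ENNReal.ofReal_mul (by norm_num : (0:ℝ) ≤ 2),
    ENNReal.mul_rpow_of_ne_top ENNReal.ofReal_ne_top hxt]
  have : (ENNReal.ofReal x) ^ ((1:ℝ)/2 - 1) * ((ENNReal.ofReal 2) ^ ((1:ℝ)/2) * (ENNReal.ofReal x) ^ ((1:ℝ)/2))
      = (ENNReal.ofReal 2) ^ ((1:ℝ)/2) * ((ENNReal.ofReal x) ^ ((1:ℝ)/2 - 1) * (ENNReal.ofReal x) ^ ((1:ℝ)/2)) := by ring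
  rw [this, ← ENNReal.rpow_add _ _ hx0 hxt]
  norm_num
  rw [show (2:ℝ≥0∞) = ENNReal.ofReal 2 by simp,
    ENNReal.ofReal_rpow_of_pos (by norm_num : (0:ℝ) < 2), ← Real.sqrt_eq_rpow]

end main

section thm
variable {f : ℝ → ℝ}

lemma part2 (hn : ∀ n : ℕ, 3 ≤ n → ∀ x : ℝ, 1 / (n : ℝ) < x → x ≤ 1 / ((n : ℝ) - 1) →
      f x = x ^ 2 + 1 / (n : ℝ) - 1 / (n : ℝ) ^ 2)
    (htop : ∀ x : ℝ, 1 / 2 < x → f x = x ^ 2 + 1 / 4) :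
    Filter.Tendsto
      (fun n : ℕ => (ENNReal.ofReal (f (1 / ((n : ℝ) - 1)))) ^ ((1 : ℝ) / 2 - 1) *
        dSubR f (1 / ((n : ℝ) - 1))) Filter.atTop (nhds 0) := by
  set S : ℕ → ℝ := fun n => 1 / ((n:ℝ) - 1) with hSdef
  have hS : Tendsto S atTop (nhds 0) := by
    have h1 : Tendsto (fun n : ℕ => (n:ℝ) - 1) atTop atTop :=
      tendsto_atTop_add_const_right _ _ tendsto_natCast_atTop_atTop
    simp only [hSdef, one_div]; exact h1.inv_tendsto_atTop
  have key : ∀ n : ℕ, 3 ≤ n →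
      (ENNReal.ofReal (f (S n))) ^ ((1 : ℝ) / 2 - 1) * dSubR f (S n)
        ≤ ENNReal.ofReal (2 * Real.sqrt 2 * Real.sqrt (S n)) := by
    intro n h3
    have hm : (3:ℝ) ≤ (n:ℝ) := by exact_mod_cast h3
    have hm1 : (0:ℝ) < (n:ℝ) - 1 := by linarith
    have ha : 0 < S n := by simp only [hSdef]; positivity
    have hlt : 1/(n:ℝ) < S n := by
      simp only [hSdef]
      exact one_div_lt_one_div_of_lt hm1 (by linarith)
    have hfa : f (S n) = (S n)^2 + 1/(n:ℝ) - 1/(n:ℝ)^2 := hn n h3 (S n) hlt le_rfl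
    have hF2 : S n / 2 ≤ f (S n) := by
      rw [hfa]
      simp only [hSdef]
      have hmpos : (0:ℝ) < (n:ℝ) := by linarith
      have epow : (1/((n:ℝ)-1))^2 = 1/((n:ℝ)-1)^2 := by rw [div_pow]; norm_num
      rw [epow]
      have e : 1/((n:ℝ)-1)^2 + 1/(n:ℝ) - 1/(n:ℝ)^2 - 1/((n:ℝ)-1)/2
          = ((n:ℝ)^3 - 3*(n:ℝ)^2 + 6*(n:ℝ) - 2) / (2*(n:ℝ)^2*((n:ℝ)-1)^2) := by
        field_simp
        ring
      have hnum : (0:ℝ) ≤ (n:ℝ)^3 - 3*(n:ℝ)^2 + 6*(n:ℝ) - 2 := by nlinarith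
      have hquot : (0:ℝ) ≤ ((n:ℝ)^3 - 3*(n:ℝ)^2 + 6*(n:ℝ) - 2) / (2*(n:ℝ)^2*((n:ℝ)-1)^2) :=
        div_nonneg hnum (by positivity)
      rw [← e] at hquot
      linarith
    have hF : 0 < f (S n) := lt_of_lt_of_le (by positivity) hF2
    have hd : dSubR f (S n) = ENNReal.ofReal (2 * S n) := dSub_eq hn htop ha
    rw [hd, ENNReal.ofReal_rpow_of_pos hF,
      ← ENNReal.ofReal_mul (Real.rpow_nonneg hF.le _)]
    apply ENNReal.ofReal_le_ofReal
    have h1 : (f (S n))^((1:ℝ)/2 - 1) ≤ (S n / 2)^((1:ℝ)/2 - 1) :=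
      Real.rpow_le_rpow_of_nonpos (by positivity) hF2 (by norm_num)
    have h2 : (S n / 2)^((1:ℝ)/2 - 1) = Real.sqrt 2 / Real.sqrt (S n) := by
      rw [show (1:ℝ)/2 - 1 = -(1/2) by norm_num, Real.rpow_neg (by positivity),
        ← Real.sqrt_eq_rpow, Real.sqrt_div ha.le, inv_div]
    have hs : 0 < Real.sqrt (S n) := Real.sqrt_pos.mpr ha
    have hmul : Real.sqrt (S n) * Real.sqrt (S n) = S n := Real.mul_self_sqrt ha.le
    calc (f (S n))^((1:ℝ)/2 - 1) * (2 * S n)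
        ≤ (Real.sqrt 2 / Real.sqrt (S n)) * (2 * S n) := by
          apply mul_le_mul_of_nonneg_right (h1.trans_eq h2) (by positivity)
      _ = 2 * Real.sqrt 2 * Real.sqrt (S n) := by
          field_simp
          nlinarith [hmul, Real.sqrt_nonneg (2:ℝ)]
  have hRHS : Tendsto (fun n : ℕ => ENNReal.ofReal (2 * Real.sqrt 2 * Real.sqrt (S n)))
      atTop (nhds 0) := by
    have h1 : Tendsto (fun n : ℕ => Real.sqrt (S n)) atTop (nhds 0) := by
      have := (Real.continuous_sqrt.tendsto 0).comp hS
      simpa [Function.comp_def] using this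
    have h2 : Tendsto (fun n : ℕ => 2 * Real.sqrt 2 * Real.sqrt (S n)) atTop (nhds 0) := by
      simpa using h1.const_mul (2 * Real.sqrt 2)
    have := (ENNReal.continuous_ofReal.tendsto 0).comp h2
    simpa [Function.comp_def] using this
  apply tendsto_of_tendsto_of_tendsto_of_le_of_le' tendsto_const_nhds hRHS
  · exact Filter.Eventually.of_forall (fun n => zero_le)
  · filter_upwards [Filter.eventually_ge_atTop 3] with n h3
    exact key n h3

end thm

/-- for the lsc step-quadratic function and `q = 1/2`:
`d(x,[f≤0])^{q−1} d(0,∂f(x))^q = √2` at non-breakpoints `x > 0`;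
`f(x_n)^{q−1} d(0,∂f(x_n)) → 0` along the breakpoints `x_n = 1/(n−1)`;
hence (with the liminf taken as `x → 0`, `f(x) > 0`, `f(x) → 0`)
`liminf d(x,[f≤0])^{q−1} d(0,∂f(x))^q > 0` but `liminf f(x)^{q−1} d(0,∂f(x)) = 0`. -/
theorem stmt_12 (f : ℝ → ℝ)
    (h0 : ∀ x : ℝ, x ≤ 0 → f x = 0)
    (hn : ∀ n : ℕ, 3 ≤ n → ∀ x : ℝ, 1 / (n : ℝ) < x → x ≤ 1 / ((n : ℝ) - 1) →
      f x = x ^ 2 + 1 / (n : ℝ) - 1 / (n : ℝ) ^ 2)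
    (htop : ∀ x : ℝ, 1 / 2 < x → f x = x ^ 2 + 1 / 4) :
    (∀ x : ℝ, 0 < x → (∀ n : ℕ, 3 ≤ n → x ≠ 1 / ((n : ℝ) - 1)) →
      (ENNReal.ofReal x) ^ ((1 : ℝ) / 2 - 1) * (dSubR f x) ^ ((1 : ℝ) / 2)
        = ENNReal.ofReal (Real.sqrt 2)) ∧
    Filter.Tendsto
      (fun n : ℕ => (ENNReal.ofReal (f (1 / ((n : ℝ) - 1)))) ^ ((1 : ℝ) / 2 - 1) *
        dSubR f (1 / ((n : ℝ) - 1))) Filter.atTop (nhds 0) ∧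
    0 < Filter.liminf
        (fun x : ℝ => (ENNReal.ofReal x) ^ ((1 : ℝ) / 2 - 1) *
          (dSubR f x) ^ ((1 : ℝ) / 2))
        (nhdsWithin 0 {x : ℝ | 0 < f x} ⊓ Filter.comap f (nhds 0)) ∧
    Filter.liminf
        (fun x : ℝ => (ENNReal.ofReal (f x)) ^ ((1 : ℝ) / 2 - 1) * dSubR f x)
        (nhdsWithin 0 {x : ℝ | 0 < f x} ⊓ Filter.comap f (nhds 0)) = 0 := by
  have hpos : ∀ x : ℝ, 0 < f x → 0 < x := by
    intro x h
    by_contra hc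
    push_neg at hc
    rw [h0 x hc] at h
    exact lt_irrefl 0 h
  have hval : ∀ x : ℝ, 0 < x →
      (ENNReal.ofReal x) ^ ((1 : ℝ) / 2 - 1) * (dSubR f x) ^ ((1 : ℝ) / 2)
        = ENNReal.ofReal (Real.sqrt 2) := by
    intro x hx
    rw [dSub_eq hn htop hx]
    exact val_eq hx
  refine ⟨fun x hx _ => hval x hx, part2 hn htop, ?_, ?_⟩
  · -- liminf > 0
    have hs_mem : {x : ℝ | 0 < f x} ∈
        (nhdsWithin (0:ℝ) {x : ℝ | 0 < f x} ⊓ Filter.comap f (nhds 0)) :=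
      Filter.mem_inf_of_left self_mem_nhdsWithin
    have hev : ∀ᶠ x in (nhdsWithin (0:ℝ) {x : ℝ | 0 < f x} ⊓ Filter.comap f (nhds 0)),
        ENNReal.ofReal (Real.sqrt 2) ≤
          (ENNReal.ofReal x) ^ ((1 : ℝ) / 2 - 1) * (dSubR f x) ^ ((1 : ℝ) / 2) := by
      filter_upwards [hs_mem] with x hx
      exact (hval x (hpos x hx)).ge
    have hlim := Filter.le_liminf_of_le (by isBoundedDefault) hev
    have hpos2 : (0:ℝ≥0∞) < ENNReal.ofReal (Real.sqrt 2) :=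
      ENNReal.ofReal_pos.mpr (Real.sqrt_pos.mpr (by norm_num))
    exact lt_of_lt_of_le hpos2 hlim
  · -- liminf = 0
    set S : ℕ → ℝ := fun n => 1 / ((n:ℝ) - 1) with hSdef
    set u : ℝ → ℝ≥0∞ := fun x => (ENNReal.ofReal (f x)) ^ ((1 : ℝ) / 2 - 1) * dSubR f x
      with hudef
    have hS : Tendsto S atTop (nhds 0) := by
      have h1 : Tendsto (fun n : ℕ => (n:ℝ) - 1) atTop atTop :=
        tendsto_atTop_add_const_right _ _ tendsto_natCast_atTop_atTop
      simp only [hSdef, one_div]; exact h1.inv_tendsto_atTop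
    have hfa : ∀ᶠ n in atTop, f (S n) = (S n)^2 + 1/(n:ℝ) - 1/(n:ℝ)^2 := by
      filter_upwards [Filter.eventually_ge_atTop 3] with n h3
      have hm : (3:ℝ) ≤ (n:ℝ) := by exact_mod_cast h3
      have hm1 : (0:ℝ) < (n:ℝ) - 1 := by linarith
      exact hn n h3 (S n) (one_div_lt_one_div_of_lt hm1 (by linarith)) le_rfl
    have hfS0 : Tendsto (fun n : ℕ => f (S n)) atTop (nhds 0) := by
      have hn1 : Tendsto (fun n : ℕ => 1/(n:ℝ)) atTop (nhds 0) :=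
        tendsto_one_div_atTop_nhds_zero_nat
      have hn2 : Tendsto (fun n : ℕ => 1/(n:ℝ)^2) atTop (nhds 0) := by
        have : (fun n : ℕ => 1/(n:ℝ)^2) = fun n : ℕ => (1/(n:ℝ))^2 := by
          funext n; rw [div_pow]; norm_num
        rw [this]
        simpa using hn1.pow 2
      have hlim : Tendsto (fun n : ℕ => (S n)^2 + 1/(n:ℝ) - 1/(n:ℝ)^2) atTop (nhds 0) := by
        have := ((hS.pow 2).add hn1).sub hn2
        simpa using this
      exact hlim.congr' (Filter.EventuallyEq.symm hfa)
    have hmem_ev : ∀ᶠ n in atTop, S n ∈ {x : ℝ | 0 < f x} := by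
      filter_upwards [hfa, Filter.eventually_ge_atTop 3] with n heq h3
      have hm : (3:ℝ) ≤ (n:ℝ) := by exact_mod_cast h3
      have hm1 : (0:ℝ) < (n:ℝ) - 1 := by linarith
      have hmpos : (0:ℝ) < (n:ℝ) := by linarith
      have : (0:ℝ) < (S n)^2 + 1/(n:ℝ) - 1/(n:ℝ)^2 := by
        have h1 : 1/(n:ℝ)^2 < 1/(n:ℝ) := by
          rw [div_lt_div_iff₀ (by positivity) hmpos]
          nlinarith
        nlinarith [sq_nonneg (S n)]
      simp only [Set.mem_setOf_eq, heq]
      exact this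
    have hmapS : Tendsto S atTop
        (nhdsWithin (0:ℝ) {x : ℝ | 0 < f x} ⊓ Filter.comap f (nhds 0)) := by
      rw [Filter.tendsto_inf]
      constructor
      · rw [tendsto_nhdsWithin_iff]
        exact ⟨hS, hmem_ev⟩
      · rw [Filter.tendsto_comap_iff]
        exact hfS0
    have h1 : Filter.liminf u
        (nhdsWithin (0:ℝ) {x : ℝ | 0 < f x} ⊓ Filter.comap f (nhds 0))
        ≤ Filter.liminf u (Filter.map S atTop) :=
      Filter.liminf_le_liminf_of_le hmapS
    have h2 : Filter.liminf u (Filter.map S atTop) = 0 := by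
      have htend : Tendsto u (Filter.map S atTop) (nhds 0) := by
        rw [Filter.tendsto_map'_iff]
        exact part2 hn htop
      exact htend.liminf_eq
    exact le_antisymm (h1.trans h2.le) zero_le
end

section
/- Let X be a complete metric space, f : X → ℝ ∪ {+∞} lower semicontinuous and bounded below, and x ∈ X with f(x) > 0 and f(x) < α τ̂ d(x, [f ≤ 0]) for some α ∈ (0,1], τ̂ > 0 (where d(x, ∅) = +∞). Then there exists û ∈ X such that f₊(û) ≤ f(x), ‖û − x‖ < α d(x, [f ≤ 0]), û ∉ [f ≤ 0] (so f(û) > 0), and f₊(û) ≤ f₊(u) + τ̂ d(u, û) for all u ∈ X; moreover, if [f ≤ 0] ≠ ∅ then f(û) ≤ τ̂ d(û, [f ≤ 0]). -/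
open EMetric ENNReal Filter Topology

private lemma evp {X : Type*} [MetricSpace X] [CompleteSpace X]
    (g : X → ℝ≥0∞) (hlsc : LowerSemicontinuous g)
    (x : X) (hgx : g x ≠ ⊤) (δ : ℝ≥0∞) (hδ0 : δ ≠ 0) (hδT : δ ≠ ⊤) :
    ∃ y : X, g y + δ * edist y x ≤ g x ∧ ∀ u, g y ≤ g u + δ * edist u y := by
  set R : X → X → Prop := fun z w => g z + δ * edist z w ≤ g w with hR
  have hRrefl : ∀ w, R w w := by intro w; simp [hR]
  have hRtrans : ∀ a b c, R a b → R b c → R a c := by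
    intro a b c hab hbc
    calc g a + δ * edist a c ≤ g a + δ * (edist a b + edist b c) := by
          gcongr; exact edist_triangle a b c
      _ = (g a + δ * edist a b) + δ * edist b c := by ring
      _ ≤ g b + δ * edist b c := by gcongr
      _ ≤ g c := hbc
  have hRle : ∀ z w, R z w → g z ≤ g w := fun z w h => le_trans le_self_add h
  have key : ∀ (w : X) (n : ℕ), ∃ z, R z w ∧ ∀ v, R v w → g z ≤ g v + 2⁻¹ ^ n := by
    intro w n
    by_cases hI : (⨅ v : {v // R v w}, g v.1) = ⊤
    · refine ⟨w, hRrefl w, fun v hv => ?_⟩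
      have : g v = ⊤ := by simpa using (iInf_eq_top.mp hI) ⟨v, hv⟩
      simp [this]
    · have hlt : (⨅ v : {v // R v w}, g v.1) < (⨅ v : {v // R v w}, g v.1) + 2⁻¹ ^ n :=
        ENNReal.lt_add_right hI (by simp)
      obtain ⟨⟨z, hz⟩, hzlt⟩ := iInf_lt_iff.mp hlt
      refine ⟨z, hz, fun v hv => ?_⟩
      calc g z ≤ (⨅ v : {v // R v w}, g v.1) + 2⁻¹ ^ n := hzlt.le
        _ ≤ g v + 2⁻¹ ^ n := by gcongr; exact iInf_le (fun v : {v // R v w} => g v.1) ⟨v, hv⟩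
  choose step hstep1 hstep2 using key
  set y : ℕ → X := fun n => Nat.rec x (fun n w => step w n) n with hy
  have hy0 : y 0 = x := rfl
  have hchain : ∀ n, R (y (n + 1)) (y n) := fun n => hstep1 (y n) n
  have hchain' : ∀ m n, n ≤ m → R (y m) (y n) := by
    intro m n h
    induction h with
    | refl => exact hRrefl _
    | step h ih => exact hRtrans _ _ _ (hchain _) ih
  have hgmono : ∀ n, g (y n) ≤ g x := by
    intro n
    have := hRle _ _ (hchain' n 0 (Nat.zero_le n))
    rwa [hy0] at this
  have hsmall : ∀ n z, R z (y (n + 1)) → δ * edist z (y (n + 1)) ≤ 2⁻¹ ^ n := by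
    intro n z hz
    have hz' : R z (y n) := hRtrans _ _ _ hz (hchain n)
    have h1 : g (y (n + 1)) ≤ g z + 2⁻¹ ^ n := hstep2 (y n) n z hz'
    have h2 : g z + δ * edist z (y (n + 1)) ≤ g z + 2⁻¹ ^ n := hz.trans h1
    have hgz : g z ≠ ⊤ := ((hRle _ _ hz').trans (hgmono n)).trans_lt (lt_top_iff_ne_top.mpr hgx) |>.ne
    exact (ENNReal.add_le_add_iff_left hgz).mp h2
  have hdist : ∀ n z, R z (y (n + 1)) → edist z (y (n + 1)) ≤ 2⁻¹ ^ n / δ := by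
    intro n z hz
    rw [ENNReal.le_div_iff_mul_le (Or.inl hδ0) (Or.inl hδT), mul_comm]
    exact hsmall n z hz
  -- Cauchy
  have hC1 : edist (y 0) (y 1) ≤ g x / δ := by
    rw [edist_comm, ENNReal.le_div_iff_mul_le (Or.inl hδ0) (Or.inl hδT), mul_comm]
    have := hchain 0
    have h2 : δ * edist (y 1) (y 0) ≤ g (y 0) := le_trans le_add_self this
    rwa [hy0] at h2
  have hcauchy : CauchySeq y := by
    apply cauchySeq_of_edist_le_geometric 2⁻¹ (g x / δ + 2 / δ)
    · simp [ENNReal.inv_lt_one]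
    · exact ENNReal.add_ne_top.mpr ⟨(ENNReal.div_lt_top hgx hδ0).ne, (ENNReal.div_lt_top (by simp) hδ0).ne⟩
    · intro n
      match n with
      | 0 => simpa using hC1.trans le_self_add
      | Nat.succ m =>
        have h := hdist m (y (m + 2)) (hchain (m + 1))
        rw [edist_comm]
        refine h.trans ?_
        calc (2 : ℝ≥0∞)⁻¹ ^ m / δ = (2 * 2⁻¹) * (2⁻¹ ^ m / δ) := by
              rw [ENNReal.mul_inv_cancel (by norm_num) (by norm_num), one_mul]
          _ = (2 / δ) * 2⁻¹ ^ (m + 1) := by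
              rw [pow_succ, div_eq_mul_inv, div_eq_mul_inv]; ring
          _ ≤ (g x / δ + 2 / δ) * 2⁻¹ ^ (m + 1) := by gcongr; exact le_add_self
  obtain ⟨yh, hyh⟩ := cauchySeq_tendsto_of_complete hcauchy
  have hRyh : ∀ n, R yh (y n) := by
    intro n
    have hG : LowerSemicontinuous (fun z => g z + δ * edist z (y n)) := by
      refine hlsc.add (Continuous.lowerSemicontinuous ?_)
      exact (ENNReal.continuous_const_mul hδT).comp (continuous_id.edist continuous_const)
    show g yh + δ * edist yh (y n) ≤ g (y n)
    by_contra hcon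
    push_neg at hcon
    have hev1 : ∀ᶠ m in atTop, g (y n) < g (y m) + δ * edist (y m) (y n) :=
      hyh.eventually (hG yh (g (y n)) hcon)
    have hev2 : ∀ᶠ m in atTop, g (y m) + δ * edist (y m) (y n) ≤ g (y n) :=
      eventually_atTop.mpr ⟨n, fun m hm => hchain' m n hm⟩
    obtain ⟨m, h1, h2⟩ := (hev1.and hev2).exists
    exact absurd (h1.trans_le h2) (lt_irrefl _)
  have hmain : g yh + δ * edist yh x ≤ g x := by
    have := hRyh 0; rwa [hy0] at this
  refine ⟨yh, hmain, fun u => ?_⟩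
  by_contra hcon
  push_neg at hcon
  have hu : ∀ n, R u (y n) := fun n => hRtrans _ _ _ hcon.le (hRyh n)
  have hd : ∀ n, edist u yh ≤ 2⁻¹ ^ n / δ + 2⁻¹ ^ n / δ := by
    intro n
    refine (edist_triangle u (y (n + 1)) yh).trans (add_le_add (hdist n u (hu (n + 1))) ?_)
    rw [edist_comm]
    exact hdist n yh (hRyh (n + 1))
  have hzero : edist u yh = 0 := by
    refine le_antisymm ?_ zero_le
    have ht : Tendsto (fun n : ℕ => (2 : ℝ≥0∞)⁻¹ ^ n / δ + 2⁻¹ ^ n / δ) atTop (𝓝 0) := by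
      have hp : Tendsto (fun n : ℕ => (2 : ℝ≥0∞)⁻¹ ^ n / δ) atTop (𝓝 0) := by
        have := ENNReal.tendsto_pow_atTop_nhds_zero_of_lt_one
          (r := (2 : ℝ≥0∞)⁻¹) (by simp [ENNReal.inv_lt_one])
        simpa [div_eq_mul_inv] using
          ENNReal.Tendsto.mul_const this (Or.inr (ENNReal.inv_ne_top.mpr hδ0))
      simpa using hp.add hp
    exact ge_of_tendsto' ht hd
  have : u = yh := by rwa [edist_eq_zero] at hzero
  subst this
  simp at hcon

open EMetric ENNReal

/-- Ekeland step: `X` complete metric, `f` lsc bounded below,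
`0 < f(x) < α τ̂ d(x,[f≤0])` (with `d(x,∅) = +∞`). Then there is `û` with
`f₊(û) ≤ f(x)`, `d(û,x) < α d(x,[f≤0])`, `û ∉ [f≤0]` (so `f(û) > 0`),
`f₊(û) ≤ f₊(u) + τ̂ d(u,û)` for all `u`, and `f(û) ≤ τ̂ d(û,[f≤0])` if `[f≤0] ≠ ∅`. -/
theorem stmt_15 {X : Type*} [MetricSpace X] [CompleteSpace X]
    (f : X → EReal) (hbot : ∀ u, f u ≠ ⊥) (hlsc : LowerSemicontinuous f)
    (hbdd : ∃ m : ℝ, ∀ u, (m : EReal) ≤ f u)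
    (x : X) (α τ' : ℝ) (hα0 : 0 < α) (hα1 : α ≤ 1) (hτ : 0 < τ')
    (hx : 0 < f x)
    (hlt : f x <
      ((ENNReal.ofReal α * ENNReal.ofReal τ' *
        EMetric.infEdist x {u | f u ≤ 0} : ℝ≥0∞) : EReal)) :
    ∃ uhat : X,
      max (f uhat) 0 ≤ f x ∧
      edist uhat x < ENNReal.ofReal α * EMetric.infEdist x {u | f u ≤ 0} ∧
      uhat ∉ {u | f u ≤ 0} ∧ 0 < f uhat ∧
      (∀ u : X, max (f uhat) 0 ≤
        max (f u) 0 + ((ENNReal.ofReal τ' * edist u uhat : ℝ≥0∞) : EReal)) ∧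
      ({u | f u ≤ 0}.Nonempty →
        f uhat ≤ ((ENNReal.ofReal τ' *
          EMetric.infEdist uhat {u | f u ≤ 0} : ℝ≥0∞) : EReal)) := by
  classical
  set S : Set X := {u | f u ≤ 0} with hS
  set δ : ℝ≥0∞ := ENNReal.ofReal τ' with hδ
  have hδ0 : δ ≠ 0 := (ENNReal.ofReal_pos.mpr hτ).ne'
  have hδT : δ ≠ ⊤ := ENNReal.ofReal_ne_top
  set g : X → ℝ≥0∞ := fun u => if f u = ⊤ then ⊤ else ENNReal.ofReal (f u).toReal with hg
  have hcoe : ∀ u, ((g u : ℝ≥0∞) : EReal) = max (f u) 0 := by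
    intro u
    by_cases hu : f u = ⊤
    · rw [hg]
      simp only [hu, if_pos]
      rw [EReal.coe_ennreal_top]
      exact (max_eq_left (le_top : (0:EReal) ≤ ⊤)).symm
    · rw [hg]
      simp only [hu, if_neg, if_false]
      rw [EReal.coe_ennreal_ofReal]
      have hmono : Monotone (fun r : ℝ => (r : EReal)) := fun a b h => EReal.coe_le_coe_iff.mpr h
      rw [hmono.map_max, EReal.coe_toReal hu (hbot u), EReal.coe_zero]
  have hglsc : LowerSemicontinuous g := by
    intro u b hb
    have hbT : (b : EReal) < max (f u) 0 := by
      rw [← hcoe u]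
      exact EReal.coe_ennreal_lt_coe_ennreal_iff.mpr hb
    have hbf : (b : EReal) < f u := by
      rcases lt_max_iff.mp hbT with h | h
      · exact h
      · exact absurd h (not_lt.mpr (EReal.coe_ennreal_nonneg b))
    filter_upwards [hlsc u _ hbf] with z hz
    have h2 : (b : EReal) < max (f z) 0 := hz.trans_le (le_max_left _ _)
    rw [← hcoe z] at h2
    exact EReal.coe_ennreal_lt_coe_ennreal_iff.mp h2
  have hfxT : f x ≠ ⊤ := (hlt.trans_le le_top).ne
  have hgx : g x ≠ ⊤ := by
    rw [hg]; simp only [hfxT, if_neg, if_false]; exact ENNReal.ofReal_ne_top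
  have hgxcoe : ((g x : ℝ≥0∞) : EReal) = f x := by rw [hcoe x, max_eq_left hx.le]
  have hltA : g x < ENNReal.ofReal α * δ * EMetric.infEdist x S := by
    rw [← EReal.coe_ennreal_lt_coe_ennreal_iff, hgxcoe]
    exact hlt
  obtain ⟨y, hy1, hy2⟩ := evp g hglsc x hgx δ hδ0 hδT
  have hgyx : g y ≤ g x := le_trans le_self_add hy1
  have hmax : max (f y) 0 ≤ f x := by
    rw [← hcoe y, ← hgxcoe]
    exact EReal.coe_ennreal_le_coe_ennreal_iff.mpr hgyx
  have hdistlt : edist y x < ENNReal.ofReal α * EMetric.infEdist x S := by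
    have hd1 : δ * edist y x ≤ g x := le_trans le_add_self hy1
    have hd2 : edist y x ≤ g x / δ :=
      (ENNReal.le_div_iff_mul_le (Or.inl hδ0) (Or.inl hδT)).mpr (by rwa [mul_comm])
    have hd3 : g x / δ < ENNReal.ofReal α * EMetric.infEdist x S := by
      rw [ENNReal.div_lt_iff (Or.inl hδ0) (Or.inl hδT)]
      calc g x < ENNReal.ofReal α * δ * EMetric.infEdist x S := hltA
        _ = ENNReal.ofReal α * EMetric.infEdist x S * δ := by ring
    exact hd2.trans_lt hd3
  have hyS : y ∉ S := by
    intro hyS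
    have h1 : EMetric.infEdist x S ≤ edist y x := by
      rw [edist_comm]; exact infEdist_le_edist_of_mem hyS
    have h3 : ENNReal.ofReal α * EMetric.infEdist x S ≤ EMetric.infEdist x S :=
      mul_le_of_le_one_left zero_le (ENNReal.ofReal_le_one.mpr hα1)
    exact absurd (h1.trans_lt (hdistlt.trans_le h3)) (lt_irrefl _)
  have hfy : 0 < f y := not_le.mp hyS
  refine ⟨y, hmax, hdistlt, hyS, hfy, ?_, ?_⟩
  · intro u
    have h := EReal.coe_ennreal_le_coe_ennreal_iff.mpr (hy2 u)
    rw [EReal.coe_ennreal_add, hcoe y, hcoe u] at h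
    exact h
  · intro _
    have h0 : ∀ u ∈ S, g u = 0 := by
      intro u hu
      have huS : f u ≤ 0 := hu
      have huT : f u ≠ ⊤ := by
        intro h; rw [h] at huS; exact absurd huS (by simp)
      rw [hg]
      simp only [huT, if_neg, if_false]
      rw [ENNReal.ofReal_eq_zero]
      have := EReal.coe_toReal huT (hbot u)
      have h2 : ((f u).toReal : EReal) ≤ ((0:ℝ) : EReal) := by
        rw [this]; exact_mod_cast huS
      exact_mod_cast h2
    have h1 : ∀ u ∈ S, g y / δ ≤ edist y u := by
      intro u hu
      rw [ENNReal.div_le_iff_le_mul (Or.inl hδ0) (Or.inl hδT)]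
      have h := hy2 u
      rw [h0 u hu, zero_add, edist_comm, mul_comm] at h
      exact h
    have h2 : g y ≤ δ * EMetric.infEdist y S := by
      have h3 : g y / δ ≤ EMetric.infEdist y S := le_infEdist.mpr h1
      have := (ENNReal.div_le_iff_le_mul (Or.inl hδ0) (Or.inl hδT)).mp h3
      rwa [mul_comm] at this
    calc f y ≤ max (f y) 0 := le_max_left _ _
      _ = ((g y : ℝ≥0∞) : EReal) := (hcoe y).symm
      _ ≤ ((δ * EMetric.infEdist y S : ℝ≥0∞) : EReal) :=
        EReal.coe_ennreal_le_coe_ennreal_iff.mpr h2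
end

section
/- Let X be a Banach space, f : X → ℝ ∪ {+∞} convex lower semicontinuous, x̄ ∈ [f ≤ 0], τ > 0, δ ∈ (0,∞] and q ∈ (0,1]. If d(x, [f ≤ 0])^{q−1} · d(0, ∂f(x))^q ≥ τ for all x ∈ B_δ(x̄) with f(x) > 0 and f(x)^q < τ d(x, [f ≤ 0]), then for every α ∈ (0,1) and every x ∈ B_{δ/(1+α)}(x̄) one has α^q (1−α)^{1−q} τ d(x, [f ≤ 0]) ≤ (f₊(x))^q. -/
open EMetric ENNReal

open Filter Topology

section Helpers

namespace EReal

lemma toENN_top_s18 : (⊤ : EReal).toENN = ⊤ := if_pos rfl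

lemma toENN_of_ne_top {a : EReal} (h : a ≠ ⊤) : a.toENN = ENNReal.ofReal a.toReal := if_neg h

lemma toENN_coe_s18 (r : ℝ) : (r : EReal).toENN = ENNReal.ofReal r := by
  rw [toENN_of_ne_top (coe_ne_top r), toReal_coe]

lemma toENN_mono_s18 {a b : EReal} (h : a ≤ b) : a.toENN ≤ b.toENN := by
  by_cases hb : b = ⊤
  · simp [hb, toENN_top_s18]
  have ha : a ≠ ⊤ := fun hh => hb (top_le_iff.1 (hh ▸ h))
  rw [toENN_of_ne_top ha, toENN_of_ne_top hb]
  by_cases hab : a = ⊥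
  · simp [hab]
  exact ENNReal.ofReal_le_ofReal (toReal_le_toReal h hab hb)

lemma toENN_zero : (0 : EReal).toENN = 0 := by
  rw [show ((0 : EReal)) = ((0 : ℝ) : EReal) by norm_cast, toENN_coe_s18]; simp

lemma toENN_mul_le {t : ℝ} (ht : 0 ≤ t) {a : EReal} (ha : a ≠ ⊥) :
    ((t : EReal) * a).toENN ≤ ENNReal.ofReal t * a.toENN := by
  rcases ht.lt_or_eq with ht' | ht'
  · by_cases hat : a = ⊤
    · rw [hat, coe_mul_top_of_pos ht', toENN_top_s18,
        ENNReal.mul_top (by simp [ENNReal.ofReal_eq_zero, not_le.2 ht'])]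
    · obtain ⟨x, rfl⟩ : ∃ x : ℝ, a = (x : EReal) := ⟨a.toReal, (coe_toReal hat ha).symm⟩
      rw [← coe_mul, toENN_coe_s18, toENN_coe_s18, ENNReal.ofReal_mul ht]
  · rw [← ht']
    simp only [coe_zero, EReal.zero_mul, toENN_zero]
    simp

lemma toENN_add_le {a b : EReal} (ha : a ≠ ⊥) (hb : b ≠ ⊥) :
    (a + b).toENN ≤ a.toENN + b.toENN := by
  by_cases hat : a = ⊤
  · rw [hat, top_add_of_ne_bot hb, toENN_top_s18]; simp [toENN_top_s18]
  by_cases hbt : b = ⊤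
  · rw [hbt, add_comm, top_add_of_ne_bot ha, toENN_top_s18]; simp [toENN_top_s18]
  obtain ⟨x, rfl⟩ : ∃ x : ℝ, a = (x : EReal) := ⟨a.toReal, (coe_toReal hat ha).symm⟩
  obtain ⟨y, rfl⟩ : ∃ y : ℝ, b = (y : EReal) := ⟨b.toReal, (coe_toReal hbt hb).symm⟩
  rw [← coe_add, toENN_coe_s18, toENN_coe_s18, toENN_coe_s18]
  exact ENNReal.ofReal_add_le

end EReal

lemma toENN_lsc {X : Type*} [TopologicalSpace X] {f : X → EReal} (hbot : ∀ u, f u ≠ ⊥)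
    (hf : LowerSemicontinuous f) : LowerSemicontinuous fun u => (f u).toENN := by
  intro x y hy
  change y < (f x).toENN at hy
  have hyt : y ≠ ⊤ := hy.ne_top
  obtain ⟨b, hb1, hb2⟩ : ∃ b : ℝ, y < ENNReal.ofReal b ∧ (b : EReal) < f x := by
    by_cases ht : f x = ⊤
    · exact ⟨y.toReal + 1, by
        rw [ENNReal.lt_ofReal_iff_toReal_lt hyt]; linarith, ht ▸ EReal.coe_lt_top _⟩
    · have hfin := EReal.coe_toReal ht (hbot x)
      rw [EReal.toENN_of_ne_top ht, ENNReal.lt_ofReal_iff_toReal_lt hyt] at hy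
      refine ⟨(y.toReal + (f x).toReal) / 2, ?_, ?_⟩
      · rw [ENNReal.lt_ofReal_iff_toReal_lt hyt]; linarith
      · conv_rhs => rw [← hfin]
        exact_mod_cast (by linarith : (y.toReal + (f x).toReal) / 2 < (f x).toReal)
  filter_upwards [hf x _ hb2] with u hu
  calc y < ENNReal.ofReal b := hb1
    _ = (b : EReal).toENN := (EReal.toENN_coe_s18 b).symm
    _ ≤ (f u).toENN := EReal.toENN_mono_s18 hu.le

lemma key_ineq (α q : ℝ) (hα0 : 0 < α) (hα1 : α < 1) (hq0 : 0 < q) (hq1 : q ≤ 1)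
    (u : ℝ) (hu : 0 ≤ u) : α ^ q * (1 - α) ^ (1 - q) * u ^ q ≤ (1 - α) + α * u := by
  have h1α : (0 : ℝ) < 1 - α := by linarith
  set c : ℝ := α / (1 - α) with hc
  have hc0 : 0 < c := div_pos hα0 h1α
  have hcu : (c * u) ^ q ≤ 1 + c * u := by
    rcases le_or_gt (c * u) 1 with h | h
    · exact (Real.rpow_le_one (by positivity) h hq0.le).trans
        (by nlinarith [mul_nonneg hc0.le hu])
    · calc (c * u) ^ q ≤ (c * u) ^ (1 : ℝ) := Real.rpow_le_rpow_of_exponent_le h.le hq1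
        _ = c * u := Real.rpow_one _
        _ ≤ 1 + c * u := by linarith
  have e1 : α ^ q = c ^ q * (1 - α) ^ q := by
    rw [hc, Real.div_rpow hα0.le h1α.le]
    field_simp
  have e2 : (1 - α) ^ q * (1 - α) ^ (1 - q) = 1 - α := by
    rw [← Real.rpow_add h1α]; norm_num
  have e3 : (c * u) ^ q = c ^ q * u ^ q := Real.mul_rpow hc0.le hu
  have e4 : (1 - α) * c = α := by rw [hc]; field_simp
  calc α ^ q * (1 - α) ^ (1 - q) * u ^ q = (1 - α) * ((c * u) ^ q) := by
        rw [e1, e3]; linear_combination (c ^ q * u ^ q) * e2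
    _ ≤ (1 - α) * (1 + c * u) := mul_le_mul_of_nonneg_left hcu h1α.le
    _ = (1 - α) + α * u := by linear_combination u * e4

end Helpers

theorem ekeland_enn {X : Type*} [EMetricSpace X] [CompleteSpace X]
    (F : X → ℝ≥0∞) (hF : LowerSemicontinuous F) (x : X) (hx : F x ≠ ⊤)
    (κ : ℝ≥0∞) (hκ0 : κ ≠ 0) (hκt : κ ≠ ⊤) :
    ∃ z, F z + κ * edist z x ≤ F x ∧ ∀ u, F z ≤ F u + κ * edist u z := by
  set R : X → X → Prop := fun u v => F u + κ * edist u v ≤ F v with hR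
  have hrefl : ∀ v, R v v := by intro v; simp [hR]
  have htrans : ∀ u v w, R u v → R v w → R u w := by
    intro u v w h1 h2
    have : F u + κ * edist u w ≤ (F u + κ * edist u v) + κ * edist v w := by
      calc F u + κ * edist u w ≤ F u + κ * (edist u v + edist v w) := by
            gcongr; exact edist_triangle _ _ _
        _ = (F u + κ * edist u v) + κ * edist v w := by ring
    exact this.trans ((add_le_add_left h1 _).trans h2)
  have hstep : ∀ (n : ℕ) (v : X), ∃ u, R u v ∧
      F u ≤ (⨅ w ∈ {w | R w v}, F w) + 2⁻¹ ^ n := by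
    intro n v
    set m := ⨅ w ∈ {w | R w v}, F w with hm
    by_cases hmt : m = ⊤
    · exact ⟨v, hrefl v, by simp [hmt]⟩
    · have : m < m + 2⁻¹ ^ n := ENNReal.lt_add_right hmt (pow_ne_zero n (by simp))
      rw [hm] at this ⊢
      obtain ⟨w, hw⟩ := iInf_lt_iff.1 this
      obtain ⟨hw1, hw2⟩ := iInf_lt_iff.1 hw
      exact ⟨w, hw1, hw2.le⟩
  set seq : ℕ → X := fun n => Nat.rec x (fun n v => Classical.choose (hstep n v)) n with hseq
  have hs0 : seq 0 = x := rfl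
  have p1 : ∀ n, R (seq (n + 1)) (seq n) := fun n => (Classical.choose_spec (hstep n (seq n))).1
  have p2 : ∀ n, F (seq (n + 1)) ≤ (⨅ w ∈ {w | R w (seq n)}, F w) + 2⁻¹ ^ n :=
    fun n => (Classical.choose_spec (hstep n (seq n))).2
  have chain : ∀ m n, n ≤ m → R (seq m) (seq n) := by
    intro m n hnm
    induction m, hnm using Nat.le_induction with
    | base => exact hrefl _
    | succ m hnm ih => exact htrans _ _ _ (p1 m) ih
  have hFle : ∀ m n, n ≤ m → F (seq m) ≤ F (seq n) := by
    intro m n hnm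
    exact le_trans (le_add_right le_rfl) (chain m n hnm)
  have hFx : ∀ n, F (seq n) ≤ F x := fun n => hs0 ▸ hFle n 0 (Nat.zero_le n)
  have hFnt : ∀ n, F (seq n) ≠ ⊤ := fun n => (lt_of_le_of_lt (hFx n) hx.lt_top).ne
  set l := ⨅ n, F (seq n) with hl
  have hlt : l ≠ ⊤ := (lt_of_le_of_lt (iInf_le _ 0) (hs0 ▸ hx.lt_top)).ne
  have hcauchy : CauchySeq seq := by
    refine EMetric.cauchySeq_iff'.2 fun ε hε => ?_
    have hke : κ * ε ≠ 0 := by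
      simp [hκ0, hε.ne']
    have : l < l + κ * ε := ENNReal.lt_add_right hlt hke
    obtain ⟨N, hN⟩ := iInf_lt_iff.1 this
    refine ⟨N, fun n hn => ?_⟩
    have h1 : F (seq n) + κ * edist (seq n) (seq N) ≤ F (seq N) := chain n N hn
    have h2 : l + κ * edist (seq n) (seq N) ≤ F (seq n) + κ * edist (seq n) (seq N) := by
      gcongr; exact iInf_le _ n
    have h3 : l + κ * edist (seq n) (seq N) < l + κ * ε := lt_of_le_of_lt (h2.trans h1) hN
    have h4 : κ * edist (seq n) (seq N) < κ * ε :=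
      (ENNReal.add_lt_add_iff_left hlt).1 h3
    exact (ENNReal.mul_lt_mul_iff_right hκ0 hκt).1 h4
  obtain ⟨z, hz⟩ := cauchySeq_tendsto_of_complete hcauchy
  have key : ∀ n, F z + κ * edist z (seq n) ≤ F (seq n) := by
    intro n
    by_contra hcon
    push_neg at hcon
    set G : X → ℝ≥0∞ := fun u => F u + κ * edist u (seq n) with hG
    have hGlsc : LowerSemicontinuous G := by
      have hc : Continuous fun u : X => κ * edist u (seq n) :=
        (ENNReal.continuous_const_mul hκt).comp (continuous_id.edist continuous_const)
      exact hF.add hc.lowerSemicontinuous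
    have hev1 : ∀ᶠ m in atTop, F (seq n) < G (seq m) :=
      hz.eventually (hGlsc z _ hcon)
    have hev2 : ∀ᶠ m in atTop, n ≤ m := eventually_ge_atTop n
    obtain ⟨m, hm1, hm2⟩ := (hev1.and hev2).exists
    exact absurd (chain m n hm2) (not_le.2 hm1)
  refine ⟨z, hs0 ▸ key 0, ?_⟩
  intro u
  by_contra hcon
  push_neg at hcon
  have hRuz : R u z := le_of_lt hcon
  have hRun : ∀ n, R u (seq n) := fun n => htrans _ _ _ hRuz (key n)
  have hzn : ∀ n, F z ≤ F (seq (n + 1)) := fun n => le_trans (le_add_right le_rfl) (key (n + 1))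
  have hmain : ∀ n : ℕ, F z ≤ F u + 2⁻¹ ^ n := by
    intro n
    refine (hzn n).trans ((p2 n).trans ?_)
    gcongr
    exact iInf₂_le u (hRun n)
  have hFzu : F z ≤ F u := by
    refine ENNReal.le_of_forall_pos_le_add fun ε hε _ => ?_
    obtain ⟨n, hn⟩ := ENNReal.exists_inv_two_pow_lt (by exact_mod_cast hε.ne' : (ε : ℝ≥0∞) ≠ 0)
    exact (hmain n).trans (add_le_add_right hn.le _)
  have : F u + κ * edist u z < F u := lt_of_lt_of_le hcon hFzu
  exact absurd this (not_lt.2 (le_add_right le_rfl))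


set_option maxHeartbeats 1000000 in
lemma exists_subgrad {X : Type*} [NormedAddCommGroup X] [NormedSpace ℝ X]
    (f : X → EReal) (hbot : ∀ u, f u ≠ ⊥) (hconv : EConvexOn f)
    (z : X) (hz0 : 0 < f z) (hzt : f z ≠ ⊤) (K : ℝ) (hK : 0 ≤ K)
    (hmin : ∀ u, (f z).toENN ≤ (f u).toENN + ENNReal.ofReal K * edist u z) :
    ∃ g ∈ ESubdiff f z, ‖g‖ ≤ K := by
  set Rz : ℝ := (f z).toReal with hRz
  have hfz : f z = (Rz : EReal) := (EReal.coe_toReal hzt (hbot z)).symm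
  have hRzpos : 0 < Rz := by
    rw [hfz] at hz0; exact_mod_cast hz0
  set E : Set (X × ℝ) := {p | 0 ≤ p.2 ∧ (f p.1).toENN ≤ ENNReal.ofReal p.2} with hE
  set C : Set (X × ℝ) := {p | p.2 + K * ‖p.1 - z‖ < Rz} with hC
  have hCopen : IsOpen C :=
    isOpen_lt (continuous_snd.add (continuous_const.mul
      ((continuous_fst.sub continuous_const).norm))) continuous_const
  have hCconv : Convex ℝ C := by
    rintro ⟨u, s⟩ hu ⟨v, t⟩ hv a b ha hb hab
    simp only [hC, Set.mem_setOf_eq, Prod.smul_mk, Prod.mk_add_mk, smul_eq_mul] at hu hv ⊢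
    have heq : a • u + b • v - z = a • (u - z) + b • (v - z) := by
      have : a • (u - z) + b • (v - z) = a • u + b • v - (a + b) • z := by module
      rw [this, hab, one_smul]
    have hn : ‖a • u + b • v - z‖ ≤ a * ‖u - z‖ + b * ‖v - z‖ := by
      rw [heq]
      refine (norm_add_le _ _).trans ?_
      rw [norm_smul, norm_smul, Real.norm_of_nonneg ha, Real.norm_of_nonneg hb]
    have hKn : K * ‖a • u + b • v - z‖ ≤ a * (K * ‖u - z‖) + b * (K * ‖v - z‖) := by
      nlinarith [mul_le_mul_of_nonneg_left hn hK]
    rcases ha.lt_or_eq with ha' | ha'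
    · have h1 : a * (s + K * ‖u - z‖) < a * Rz := by
        exact mul_lt_mul_of_pos_left hu ha'
      have h2 : b * (t + K * ‖v - z‖) ≤ b * Rz := mul_le_mul_of_nonneg_left hv.le hb
      nlinarith
    · have hb1 : b = 1 := by linarith
      have ha0 : a = 0 := by linarith
      subst hb1; rw [← ha']
      simp only [← ha', zero_smul, zero_add, one_smul, zero_mul]
      nlinarith [hv, hKn, ha0]
  have hEconv : Convex ℝ E := by
    rintro ⟨u, s⟩ hu ⟨v, t⟩ hv a b ha hb hab
    simp only [hE, Set.mem_setOf_eq, Prod.smul_mk, Prod.mk_add_mk, smul_eq_mul] at hu hv ⊢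
    have hb' : b = 1 - a := by linarith
    have ha1 : a ≤ 1 := by linarith
    subst hb'
    refine ⟨by nlinarith [hu.1, hv.1], ?_⟩
    calc (f (a • u + (1 - a) • v)).toENN
        ≤ ((a : EReal) * f u + ((1 - a : ℝ) : EReal) * f v).toENN :=
          EReal.toENN_mono_s18 (hconv u v a ha ha1)
      _ ≤ ((a : EReal) * f u).toENN + (((1 - a : ℝ) : EReal) * f v).toENN := by
          apply EReal.toENN_add_le
          · rcases ha.lt_or_eq with h | h
            · by_cases hft : f u = ⊤
              · rw [hft, EReal.coe_mul_top_of_pos h]; exact top_ne_bot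
              · obtain ⟨x, hx⟩ : ∃ x : ℝ, f u = (x : EReal) :=
                  ⟨(f u).toReal, (EReal.coe_toReal hft (hbot u)).symm⟩
                rw [hx, ← EReal.coe_mul]; exact EReal.coe_ne_bot _
            · rw [← h]; simp [EReal.zero_mul]
          · have h1a : (0:ℝ) ≤ 1 - a := by linarith
            rcases h1a.lt_or_eq with h | h
            · by_cases hft : f v = ⊤
              · rw [hft, EReal.coe_mul_top_of_pos h]; exact top_ne_bot
              · obtain ⟨x, hx⟩ : ∃ x : ℝ, f v = (x : EReal) :=
                  ⟨(f v).toReal, (EReal.coe_toReal hft (hbot v)).symm⟩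
                rw [hx, ← EReal.coe_mul]; exact EReal.coe_ne_bot _
            · rw [← h]; simp [EReal.zero_mul]
      _ ≤ ENNReal.ofReal a * (f u).toENN + ENNReal.ofReal (1 - a) * (f v).toENN :=
          add_le_add (EReal.toENN_mul_le ha (hbot u)) (EReal.toENN_mul_le (by linarith) (hbot v))
      _ ≤ ENNReal.ofReal a * ENNReal.ofReal s + ENNReal.ofReal (1 - a) * ENNReal.ofReal t := by
          gcongr
          exacts [hu.2, hv.2]
      _ = ENNReal.ofReal (a * s + (1 - a) * t) := by
          rw [← ENNReal.ofReal_mul ha, ← ENNReal.ofReal_mul (by linarith),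
            ENNReal.ofReal_add (mul_nonneg ha hu.1) (mul_nonneg (by linarith) hv.1)]
  have hdisj : Disjoint C E := by
    rw [Set.disjoint_left]
    rintro ⟨u, t⟩ hc he
    simp only [hC, hE, Set.mem_setOf_eq] at hc he
    have h1 : (f u).toENN + ENNReal.ofReal K * edist u z ≤ ENNReal.ofReal (t + K * ‖u - z‖) := by
      rw [ENNReal.ofReal_add he.1 (mul_nonneg hK (norm_nonneg _)), ENNReal.ofReal_mul hK]
      gcongr
      · exact he.2
      · rw [edist_dist, dist_eq_norm]
    have h2 : ENNReal.ofReal (t + K * ‖u - z‖) < ENNReal.ofReal Rz :=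
      (ENNReal.ofReal_lt_ofReal_iff hRzpos).2 hc
    have h3 := (hmin u).trans_lt (h1.trans_lt h2)
    rw [EReal.toENN_of_ne_top hzt] at h3
    exact lt_irrefl _ h3
  obtain ⟨φ, c, hφC, hφE⟩ := geometric_hahn_banach_open hCconv hCopen hEconv hdisj
  set g0 : X →L[ℝ] ℝ := φ.comp (ContinuousLinearMap.inl ℝ X ℝ) with hg0
  set s0 : ℝ := φ (0, 1) with hs0
  have hphi : ∀ (u : X) (t : ℝ), φ (u, t) = g0 u + t * s0 := by
    intro u t
    have hsplit : ((u, t) : X × ℝ) = (u, (0:ℝ)) + t • ((0:X), (1:ℝ)) := by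
      simp [Prod.ext_iff]
    rw [hsplit, map_add, map_smul, smul_eq_mul]
    rfl
  have hzEmem : ((z, Rz) : X × ℝ) ∈ E := ⟨hRzpos.le, le_of_eq (EReal.toENN_of_ne_top hzt)⟩
  have hEc : ∀ u t, 0 ≤ t → (f u).toENN ≤ ENNReal.ofReal t → c ≤ g0 u + t * s0 := by
    intro u t h1 h2
    have := hφE _ (⟨h1, h2⟩ : ((u, t) : X × ℝ) ∈ E)
    rwa [hphi] at this
  have hCc : ∀ ε : ℝ, 0 < ε → g0 z + (Rz - ε) * s0 < c := by
    intro ε hε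
    have hm : ((z, Rz - ε) : X × ℝ) ∈ C := by
      simp only [hC, Set.mem_setOf_eq, sub_self, norm_zero, mul_zero, add_zero]
      linarith
    have := hφC _ hm
    rwa [hphi] at this
  have hzc := hEc z Rz hRzpos.le (le_of_eq (EReal.toENN_of_ne_top hzt))
  have hs0pos : 0 < s0 := by nlinarith [hCc 1 one_pos, hzc]
  have hub : ∀ u t, 0 ≤ t → (f u).toENN ≤ ENNReal.ofReal t →
      g0 z + Rz * s0 ≤ g0 u + t * s0 := by
    intro u t h1 h2
    by_contra hcon
    push_neg at hcon
    set ε := (g0 z + Rz * s0 - (g0 u + t * s0)) / s0 with hε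
    have hεpos : 0 < ε := div_pos (by linarith) hs0pos
    have h4 := hCc ε hεpos
    have h5 := hEc u t h1 h2
    have hεs : ε * s0 = g0 z + Rz * s0 - (g0 u + t * s0) := by
      rw [hε, div_mul_cancel₀ _ hs0pos.ne']
    nlinarith [h4, h5, hεs]
  have hnorm0 : ∀ u : X, g0 u - g0 z ≤ K * ‖u - z‖ * s0 := by
    intro u
    by_contra hcon
    push_neg at hcon
    set ε := (g0 u - g0 z - K * ‖u - z‖ * s0) / s0 with hε
    have hεpos : 0 < ε := div_pos (by linarith) hs0pos
    have hmem : ((u, Rz - K * ‖u - z‖ - ε) : X × ℝ) ∈ C := by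
      simp only [hC, Set.mem_setOf_eq]
      linarith
    have h4 := hφC _ hmem
    rw [hphi] at h4
    have hεs : ε * s0 = g0 u - g0 z - K * ‖u - z‖ * s0 := by
      rw [hε, div_mul_cancel₀ _ hs0pos.ne']
    nlinarith [h4, hzc, hεs]
  set g : X →L[ℝ] ℝ := (-(s0⁻¹)) • g0 with hg
  have hgval : ∀ w, g w = -(g0 w) / s0 := by
    intro w
    simp only [hg, ContinuousLinearMap.smul_apply, smul_eq_mul]
    rw [div_eq_mul_inv]
    ring
  have hgnorm : ‖g‖ ≤ K := by
    refine ContinuousLinearMap.opNorm_le_bound _ hK fun w => ?_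
    have h1 := hnorm0 (z + w)
    have h2 := hnorm0 (z - w)
    simp only [map_add, map_sub, add_sub_cancel_left, sub_sub_cancel_left, norm_neg] at h1 h2
    rw [hgval w, Real.norm_eq_abs, abs_div, abs_of_pos hs0pos, abs_neg, div_le_iff₀ hs0pos]
    rw [abs_le]
    constructor <;> nlinarith [h1, h2]
  refine ⟨g, ?_, hgnorm⟩
  intro u
  rcases eq_or_ne (f u) ⊤ with hu | hu
  · rw [hu, hfz, EReal.top_sub_coe]
    exact le_top
  set A := (f u).toReal with hA
  have hfu : f u = (A : EReal) := (EReal.coe_toReal hu (hbot u)).symm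
  have hAgoal : g (u - z) ≤ A - Rz → ((g (u - z) : ℝ) : EReal) ≤ f u - f z := by
    intro hh
    rw [hfu, hfz, ← EReal.coe_sub]
    exact_mod_cast hh
  apply hAgoal
  rcases le_or_gt 0 (f u) with hpos | hneg
  · have hAnn : 0 ≤ A := by
      rw [hfu] at hpos; exact_mod_cast hpos
    have htENN : (f u).toENN = ENNReal.ofReal A := EReal.toENN_of_ne_top hu
    have h6 := hub u A hAnn (le_of_eq htENN)
    rw [hgval, map_sub, div_le_iff₀ hs0pos]
    nlinarith [h6]
  · have hAneg : A < 0 := by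
      rw [hfu] at hneg; exact_mod_cast hneg
    set t : ℝ := Rz / (Rz - A) with hT
    have hden : 0 < Rz - A := by linarith
    have ht0 : 0 < t := div_pos hRzpos hden
    have ht1 : t ≤ 1 := by rw [div_le_one hden]; linarith
    have hcomb := hconv u z t ht0.le ht1
    have hcval : (t : EReal) * f u + ((1 - t : ℝ) : EReal) * f z
        = ((t * A + (1 - t) * Rz : ℝ) : EReal) := by
      rw [hfu, hfz, ← EReal.coe_mul, ← EReal.coe_mul, ← EReal.coe_add]
    have hzero : t * A + (1 - t) * Rz = 0 := by
      rw [hT]; field_simp; ring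
    set w := t • u + (1 - t) • z with hw
    have hfw : f w ≤ 0 := by
      refine hcomb.trans ?_
      rw [hcval, hzero]
      exact le_of_eq EReal.coe_zero
    have hwENN : (f w).toENN ≤ ENNReal.ofReal 0 := by
      rw [ENNReal.ofReal_zero, ← EReal.toENN_zero]
      exact EReal.toENN_mono_s18 hfw
    have h7 := hub w 0 le_rfl hwENN
    have hwz : g0 w - g0 z = t * g0 (u - z) := by
      have hwsub : w - z = t • (u - z) := by rw [hw]; module
      calc g0 w - g0 z = g0 (w - z) := (map_sub g0 w z).symm
        _ = t * g0 (u - z) := by rw [hwsub, map_smul, smul_eq_mul]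
    have h8 : Rz * s0 ≤ t * g0 (u - z) := by nlinarith [h7, hwz]
    have h9 : (Rz - A) * t = Rz := by rw [hT]; field_simp
    rw [hgval, div_le_iff₀ hs0pos]
    have h10 : (Rz - A) * s0 * t ≤ g0 (u - z) * t := by nlinarith [h8, h9]
    have h11 := le_of_mul_le_mul_right h10 ht0
    nlinarith [h11]

set_option maxHeartbeats 1600000 in
/-- convex case of Theorem 3.9: if
`d(x,[f≤0])^{q−1} d(0,∂f(x))^q ≥ τ` for all `x ∈ B_δ(x̄)` with `f(x) > 0` and
`f(x)^q < τ d(x,[f≤0])`, then for every `α ∈ (0,1)` and `x ∈ B_{δ/(1+α)}(x̄)`,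
`α^q (1−α)^{1−q} τ d(x,[f≤0]) ≤ (f₊(x))^q`. Here `δ ∈ (0,∞]` and `q ∈ (0,1]`. -/
theorem stmt_18 {X : Type*} [NormedAddCommGroup X] [NormedSpace ℝ X] [CompleteSpace X]
    (f : X → EReal) (hbot : ∀ u, f u ≠ ⊥) (hconv : EConvexOn f)
    (hlsc : LowerSemicontinuous f)
    (xbar : X) (hxbar : f xbar ≤ 0) (τ q : ℝ) (hτ : 0 < τ)
    (hq0 : 0 < q) (hq1 : q ≤ 1) (δ : ℝ≥0∞) (hδ : 0 < δ)
    (h : ∀ x : X, edist x xbar < δ → 0 < f x →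
      (f x).toENN ^ q < ENNReal.ofReal τ * EMetric.infEdist x {v | f v ≤ 0} →
      ENNReal.ofReal τ ≤
        (EMetric.infEdist x {v | f v ≤ 0}) ^ (q - 1) * (dSub f x) ^ q) :
    ∀ α : ℝ, 0 < α → α < 1 → ∀ x : X,
      edist x xbar < δ / (1 + ENNReal.ofReal α) →
      ENNReal.ofReal (α ^ q * (1 - α) ^ (1 - q) * τ) *
        EMetric.infEdist x {v | f v ≤ 0} ≤ (f x).toENN ^ q := by
  intro α hα0 hα1 x hx
  have h1α : (0:ℝ) < 1 - α := by linarith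
  have hxbarS : xbar ∈ {v | f v ≤ 0} := hxbar
  -- trivial cases
  rcases le_or_gt (f x) 0 with hfx | hfx
  · rw [show EMetric.infEdist x {v | f v ≤ 0} = 0 from EMetric.infEdist_zero_of_mem (show x ∈ {v | f v ≤ 0} from hfx), mul_zero]
    exact zero_le
  rcases eq_or_ne (f x) ⊤ with hfxt | hfxt
  · rw [hfxt, EReal.toENN_top_s18, ENNReal.top_rpow_of_pos hq0]
    exact le_top
  -- main case
  by_contra hcon
  push_neg at hcon
  set S : Set X := {v | f v ≤ 0} with hS
  set D : ℝ≥0∞ := EMetric.infEdist x S with hD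
  set r : ℝ := (f x).toReal with hr
  have hfxR : f x = (r : EReal) := (EReal.coe_toReal hfxt (hbot x)).symm
  have hrpos : 0 < r := by rw [hfxR] at hfx; exact_mod_cast hfx
  have hfpx : (f x).toENN = ENNReal.ofReal r := EReal.toENN_of_ne_top hfxt
  have hDtop : D ≠ ⊤ :=
    ((EMetric.infEdist_le_edist_of_mem hxbarS).trans_lt (edist_lt_top x xbar)).ne
  have hDpos : 0 < D := by
    rcases eq_or_ne D 0 with h0 | h0
    · rw [h0, mul_zero] at hcon
      exact absurd zero_le (not_le.2 hcon)
    · exact pos_iff_ne_zero.2 h0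
  set Dr : ℝ := D.toReal with hDr
  have hDrpos : 0 < Dr := ENNReal.toReal_pos hDpos.ne' hDtop
  have hDofReal : D = ENNReal.ofReal Dr := (ENNReal.ofReal_toReal hDtop).symm
  -- real form of hcon
  have hconR : r ^ q < α ^ q * (1 - α) ^ (1 - q) * τ * Dr := by
    have h1 : (f x).toENN ^ q = ENNReal.ofReal (r ^ q) := by
      rw [hfpx, ← ENNReal.ofReal_rpow_of_pos hrpos]
    have h2 : ENNReal.ofReal (α ^ q * (1 - α) ^ (1 - q) * τ) * D
        = ENNReal.ofReal (α ^ q * (1 - α) ^ (1 - q) * τ * Dr) := by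
      rw [hDofReal, ← ENNReal.ofReal_mul (by positivity)]
    rw [h1, h2] at hcon
    exact (ENNReal.ofReal_lt_ofReal_iff (by positivity)).1 hcon
  -- Ekeland
  set K : ℝ := r / (α * Dr) with hK
  have hKpos : 0 < K := div_pos hrpos (by positivity)
  have hfplsc : LowerSemicontinuous fun u => (f u).toENN := toENN_lsc hbot hlsc
  obtain ⟨z, hek1, hek2⟩ := ekeland_enn (fun u => (f u).toENN) hfplsc x
    (by show (f x).toENN ≠ ⊤; rw [hfpx]; exact ENNReal.ofReal_ne_top) (ENNReal.ofReal K)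
    (by simp [ENNReal.ofReal_eq_zero, not_le.2 hKpos]) ENNReal.ofReal_ne_top
  set Er : ℝ := (edist z x).toReal with hEr
  have hErnn : 0 ≤ Er := ENNReal.toReal_nonneg
  have hedzx : edist z x = ENNReal.ofReal Er := (ENNReal.ofReal_toReal (edist_ne_top z x)).symm
  -- z's value facts
  have hfpzle : (f z).toENN ≤ ENNReal.ofReal r := by
    rw [← hfpx]; exact le_trans (le_add_right le_rfl) hek1
  have hfzt : f z ≠ ⊤ := by
    intro hh
    rw [hh, EReal.toENN_top_s18, top_le_iff] at hfpzle
    exact ENNReal.ofReal_ne_top hfpzle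
  set s : ℝ := (f z).toReal with hs
  have hfzR : f z = (s : EReal) := (EReal.coe_toReal hfzt (hbot z)).symm
  have hfpz : (f z).toENN = ENNReal.ofReal s := EReal.toENN_of_ne_top hfzt
  -- distance of z to x
  have hKE : K * Er ≤ r := by
    have h1 : ENNReal.ofReal K * edist z x ≤ ENNReal.ofReal r := by
      rw [← hfpx]
      exact le_trans (le_add_self) hek1
    rw [hedzx, ← ENNReal.ofReal_mul hKpos.le] at h1
    exact (ENNReal.ofReal_le_ofReal_iff hrpos.le).1 h1
  have hrK : r / K = α * Dr := by
    rw [hK]; field_simp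
  have hEle : Er ≤ α * Dr := by
    rw [← hrK, le_div_iff₀ hKpos]
    nlinarith [hKE]
  -- f z > 0
  have hfz0 : 0 < f z := by
    by_contra hh
    push_neg at hh
    have hzS : z ∈ S := hh
    have h1 : D ≤ edist z x := by
      rw [edist_comm]
      exact EMetric.infEdist_le_edist_of_mem hzS
    have h2 : Dr ≤ Er := by
      rw [hDr, hEr]
      exact ENNReal.toReal_mono (edist_ne_top z x) h1
    nlinarith [hEle, hDrpos, hα1]
  have hspos : 0 < s := by rw [hfzR] at hfz0; exact_mod_cast hfz0
  -- Ekeland 1st conclusion, real form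
  have hek1R : s + K * Er ≤ r := by
    have h1 : (f z).toENN + ENNReal.ofReal K * edist z x
        = ENNReal.ofReal (s + K * Er) := by
      rw [hfpz, hedzx, ← ENNReal.ofReal_mul hKpos.le,
        ← ENNReal.ofReal_add hspos.le (by positivity)]
    rw [h1, hfpx] at hek1
    exact (ENNReal.ofReal_le_ofReal_iff hrpos.le).1 hek1
  -- subgradient from the convex separation lemma
  obtain ⟨g, hgsub, hgnorm⟩ := exists_subgrad f hbot hconv z hfz0 hfzt K hKpos.le hek2
  have hdSub : dSub f z ≤ ENNReal.ofReal K := by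
    refine le_trans ?_ (ENNReal.ofReal_le_ofReal hgnorm)
    exact iInf₂_le g hgsub
  -- distance of z to S
  set Dz : ℝ≥0∞ := EMetric.infEdist z S with hDz
  have hDzt : Dz ≠ ⊤ :=
    ((EMetric.infEdist_le_edist_of_mem hxbarS).trans_lt (edist_lt_top z xbar)).ne
  set DzR : ℝ := Dz.toReal with hDzR
  have hDzOf : Dz = ENNReal.ofReal DzR := (ENNReal.ofReal_toReal hDzt).symm
  have hDzlow : Dr ≤ DzR + Er := by
    have h1 : D ≤ Dz + edist x z := EMetric.infEdist_le_infEdist_add_edist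
    have h2 : Dr ≤ (Dz + edist x z).toReal :=
      ENNReal.toReal_mono (ENNReal.add_ne_top.2 ⟨hDzt, edist_ne_top x z⟩) h1
    rwa [ENNReal.toReal_add hDzt (edist_ne_top x z), edist_comm, ← hEr] at h2
  have hDzRpos : 0 < DzR := by nlinarith [hEle]
  -- z is in the ball
  have hzball : edist z xbar < δ := by
    have hDle : D ≤ edist x xbar := EMetric.infEdist_le_edist_of_mem hxbarS
    have h2 : edist z x ≤ ENNReal.ofReal α * edist x xbar := by
      calc edist z x ≤ ENNReal.ofReal (α * Dr) := by
            rw [hedzx]; exact ENNReal.ofReal_le_ofReal hEle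
        _ = ENNReal.ofReal α * D := by
            rw [ENNReal.ofReal_mul hα0.le, hDofReal]
        _ ≤ ENNReal.ofReal α * edist x xbar := by gcongr
    have h3 : edist z xbar ≤ (1 + ENNReal.ofReal α) * edist x xbar := by
      calc edist z xbar ≤ edist z x + edist x xbar := edist_triangle _ _ _
        _ ≤ ENNReal.ofReal α * edist x xbar + edist x xbar := add_le_add_left h2 _
        _ = (1 + ENNReal.ofReal α) * edist x xbar := by ring
    refine h3.trans_lt ?_
    have hb0 : (1 : ℝ≥0∞) + ENNReal.ofReal α ≠ 0 :=
      (zero_lt_one.trans_le le_self_add).ne'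
    have hbt : (1 : ℝ≥0∞) + ENNReal.ofReal α ≠ ⊤ :=
      ENNReal.add_ne_top.2 ⟨ENNReal.one_ne_top, ENNReal.ofReal_ne_top⟩
    have h4 := (ENNReal.lt_div_iff_mul_lt (Or.inl hb0) (Or.inl hbt)).1 hx
    rwa [mul_comm] at h4
  -- the two cases
  by_cases hcase : (f z).toENN ^ q < ENNReal.ofReal τ * Dz
  · -- apply the hypothesis h at z
    have hh := h z hzball hfz0 hcase
    have hτle : τ ≤ DzR ^ (q - 1) * K ^ q := by
      have hb1 : dSub f z ^ q ≤ ENNReal.ofReal (K ^ q) := by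
        rw [← ENNReal.ofReal_rpow_of_pos hKpos]
        exact ENNReal.rpow_le_rpow hdSub hq0.le
      have hb2 : Dz ^ (q - 1) = ENNReal.ofReal (DzR ^ (q - 1)) := by
        rw [hDzOf, ENNReal.ofReal_rpow_of_pos hDzRpos]
      have h5 : ENNReal.ofReal τ ≤ ENNReal.ofReal (DzR ^ (q - 1) * K ^ q) := by
        rw [ENNReal.ofReal_mul (by positivity)]
        exact hh.trans (mul_le_mul' (le_of_eq hb2) hb1)
      exact (ENNReal.ofReal_le_ofReal_iff (by positivity)).1 h5
    have hDzge : (1 - α) * Dr ≤ DzR := by nlinarith [hDzlow, hEle]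
    have hmono : DzR ^ (q - 1) ≤ ((1 - α) * Dr) ^ (q - 1) := by
      rw [show q - 1 = -(1 - q) by ring, Real.rpow_neg hDzRpos.le,
        Real.rpow_neg (by positivity : (0:ℝ) ≤ (1 - α) * Dr)]
      have hbase : ((1 - α) * Dr) ^ (1 - q) ≤ DzR ^ (1 - q) :=
        Real.rpow_le_rpow (by positivity) hDzge (by linarith)
      exact inv_anti₀ (by positivity) hbase
    have h6 : τ ≤ ((1 - α) * Dr) ^ (q - 1) * K ^ q :=
      hτle.trans (mul_le_mul_of_nonneg_right hmono (by positivity))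
    have e1 : ((1 - α) * Dr) ^ (q - 1) = ((1 - α) * Dr) ^ q / ((1 - α) * Dr) := by
      rw [show q - 1 = q - 1 from rfl, Real.rpow_sub (by positivity), Real.rpow_one]
    have e2 : K ^ q = r ^ q / (α ^ q * Dr ^ q) := by
      rw [hK, Real.div_rpow hrpos.le (by positivity), Real.mul_rpow hα0.le hDrpos.le]
    have e3 : ((1 - α) * Dr) ^ q = (1 - α) ^ q * Dr ^ q := Real.mul_rpow h1α.le hDrpos.le
    have e4 : (1 - α) ^ q * (1 - α) ^ (1 - q) = 1 - α := by
      rw [← Real.rpow_add h1α]; norm_num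
    rw [e1, e3, e2] at h6
    have hDq : (0:ℝ) < Dr ^ q := by positivity
    have hαq : (0:ℝ) < α ^ q := by positivity
    have h1αq : (0:ℝ) < (1 - α) ^ q := by positivity
    have h1α1q : (0:ℝ) < (1 - α) ^ (1 - q) := by positivity
    rw [div_mul_div_comm, le_div_iff₀ (by positivity)] at h6
    -- h6 : τ * ((1-α)*Dr*(α^q*Dr^q)) ≤ (1-α)^q*Dr^q*r^q
    have hfinal : τ * (α ^ q * (1 - α) ^ (1 - q) * Dr) ≤ r ^ q := by
      refine le_of_mul_le_mul_right ?_ (mul_pos h1αq hDq)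
      calc τ * (α ^ q * (1 - α) ^ (1 - q) * Dr) * ((1 - α) ^ q * Dr ^ q)
          = τ * ((1 - α) * Dr * (α ^ q * Dr ^ q)) := by
            linear_combination (τ * α ^ q * Dr * Dr ^ q) * e4
        _ ≤ (1 - α) ^ q * Dr ^ q * r ^ q := h6
        _ = r ^ q * ((1 - α) ^ q * Dr ^ q) := by ring
    linarith [hconR, hfinal]
  · -- the complementary case
    push_neg at hcase
    have hC2R : τ * DzR ≤ s ^ q := by
      have h1 : ENNReal.ofReal τ * Dz = ENNReal.ofReal (τ * DzR) := by
        rw [ENNReal.ofReal_mul hτ.le, hDzOf]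
      have h2 : (f z).toENN ^ q = ENNReal.ofReal (s ^ q) := by
        rw [hfpz, ← ENNReal.ofReal_rpow_of_pos hspos]
      rw [h1, h2] at hcase
      exact (ENNReal.ofReal_le_ofReal_iff (by positivity)).1 hcase
    have hsr : s ≤ r := by linarith [hek1R, mul_nonneg hKpos.le hErnn]
    have hEb : Er ≤ (r - s) / K := by
      rw [le_div_iff₀ hKpos]; linarith [hek1R]
    have hDzR2 : Dr * ((1 - α) + α * (s / r)) ≤ DzR := by
      have h1 : (r - s) / K = (r - s) * (α * Dr) / r := by
        rw [hK]; field_simp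
      have h2 : Dr - (r - s) * (α * Dr) / r = Dr * ((1 - α) + α * (s / r)) := by
        field_simp; ring
      have h3 : Er ≤ (r - s) * (α * Dr) / r := h1 ▸ hEb
      linarith [hDzlow, h3, h2]
    have hmain2 : τ * (Dr * ((1 - α) + α * (s / r))) ≤ s ^ q :=
      le_trans (mul_le_mul_of_nonneg_left hDzR2 hτ.le) hC2R
    set u : ℝ := s / r with hu
    have hu0 : 0 < u := div_pos hspos hrpos
    have hkey := key_ineq α q hα0 hα1 hq0 hq1 u hu0.le
    have hsq : s ^ q = u ^ q * r ^ q := by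
      rw [hu, Real.div_rpow hspos.le hrpos.le]
      field_simp
    have hUpos : (0:ℝ) < u ^ q := by positivity
    have t1 := mul_le_mul_of_nonneg_left hkey (mul_pos hτ hDrpos).le
    have t2 := mul_lt_mul_of_pos_left hconR hUpos
    linarith [t1, t2, hmain2, hsq]
end
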